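/- arXiv:1912.08128 — 11 statements merged into one kernel-verified Lean document; each statement's English description precedes it below -/
import Mathlib

section
/- Let Q = ax²+bxy+cy² be a primitive binary quadratic form over O_F with a > 0 at the fixed embedding and negative discriminant d_Q. Then the O_F-module O_F·(a·ω_Q) + O_F equals O_K if and only if d_Q = ε²·d_K for some unit ε ∈ O_F^× with ε > 0. -/
open NumberField Complex

noncomputable section

def iota (F K : Type) [Field F] [Field K] [NumberField F] [Algebra F K]
    (u : 𝓞 F) : K := algebraMap F K (u : F)

def IsFormRoot (F K : Type) [Field F] [Field K] [NumberField F] [Algebra F K]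
    (σ : K →+* ℂ) (a b c : 𝓞 F) (ω : K) : Prop :=
  iota F K a * ω ^ 2 + iota F K b * ω + iota F K c = 0 ∧ 0 < (σ ω).im

/-- `iota` as a ring hom. -/
def iotaR (F K : Type) [Field F] [Field K] [NumberField F] [Algebra F K] :
    𝓞 F →+* K := (algebraMap F K).comp (algebraMap (𝓞 F) F)

lemma iota_eq (F K : Type) [Field F] [Field K] [NumberField F] [Algebra F K]
    (u : 𝓞 F) : iota F K u = iotaR F K u := rfl

lemma iotaR_injective (F K : Type) [Field F] [Field K] [NumberField F] [Algebra F K] :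
    Function.Injective (iotaR F K) :=
  (algebraMap F K).injective.comp RingOfIntegers.coe_injective

lemma iotaR_isIntegral (F K : Type) [Field F] [Field K] [NumberField F] [Algebra F K]
    (u : 𝓞 F) : IsIntegral ℤ (iotaR F K u) :=
  (RingOfIntegers.isIntegral_coe u).map (algebraMap F K).toIntAlgHom

lemma half_int (F : Type) [Field F] [NumberField F] (b m t : 𝓞 F)
    (h : t ^ 2 + 2 * b * t - 4 * m = 0) : ∃ μ : 𝓞 F, t = 2 * μ := by
  have h2 : ((2 : 𝓞 F) : F) = 2 := map_ofNat (algebraMap (𝓞 F) F) 2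
  have h4 : ((4 : 𝓞 F) : F) = 4 := map_ofNat (algebraMap (𝓞 F) F) 4
  have hF : (t : F) ^ 2 + 2 * (b : F) * (t : F) - 4 * (m : F) = 0 := by
    have h0 := congrArg (fun z : 𝓞 F => (z : F)) h
    push_cast [h2, h4] at h0
    linear_combination h0
  have hx : IsIntegral (𝓞 F) ((t : F) / 2) := by
    refine ⟨Polynomial.X ^ 2 + (Polynomial.C b * Polynomial.X + Polynomial.C (-m)), ?_, ?_⟩
    · exact Polynomial.monic_X_pow_add
        (lt_of_le_of_lt Polynomial.degree_linear_le (by norm_num))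
    · simp only [Polynomial.eval₂_add, Polynomial.eval₂_mul, Polynomial.eval₂_pow,
        Polynomial.eval₂_X, Polynomial.eval₂_C]
      show ((t : F) / 2) ^ 2 + ((b : F) * ((t : F) / 2) + ((-m : 𝓞 F) : F)) = 0
      push_cast
      linear_combination hF / 4
  obtain ⟨μ, hμ⟩ := IsIntegrallyClosed.isIntegral_iff.mp hx
  refine ⟨μ, RingOfIntegers.coe_injective ?_⟩
  show (t : F) = ((2 * μ : 𝓞 F) : F)
  have hμ' : ((μ : 𝓞 F) : F) = (t : F) / 2 := hμ
  field_simp at hμ'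
  push_cast [h2]
  linear_combination -hμ'

theorem stmt4 (F K : Type) [Field F] [Field K] [NumberField F] [NumberField K]
    [Algebra F K] (τ : F →+* ℝ) (σ : K →+* ℂ)
    (hcompat : ∀ x : F, σ (algebraMap F K x) = (τ x : ℂ))
    (hF_totallyReal : ∀ φ : F →+* ℂ, ∀ x : F, (φ x).im = 0)
    (hquadratic : Module.finrank F K = 2)
    (hclass : NumberField.classNumber F = 1)
    -- ω_K : generator of O_K over O_F lying in the upper half-plane
    (ωK : K) (hωKint : IsIntegral ℤ ωK) (hωKim : 0 < (σ ωK).im)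
    (hgen : ∀ x : 𝓞 K, ∃ u v : 𝓞 F, (x : K) = iota F K u * ωK + iota F K v)
    -- minimal polynomial x² + b_K x + c_K of ω_K over F, and d_K
    (bK cK : 𝓞 F) (hmin : ωK ^ 2 + iota F K bK * ωK + iota F K cK = 0)
    (dK : 𝓞 F) (hdK : dK = bK ^ 2 - 4 * cK)
    -- the form Q = ax² + bxy + cy², primitive, a > 0, with negative discriminant
    (a b c : 𝓞 F)
    (hprim : ∀ d : 𝓞 F, d ∣ a → d ∣ b → d ∣ c → IsUnit d)
    (hapos : 0 < τ (a : F))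
    (hdisc : τ ((b ^ 2 - 4 * a * c : 𝓞 F) : F) < 0)
    (ω : K) (hω : IsFormRoot F K σ a b c ω) :
    (IsIntegral ℤ (iota F K a * ω) ∧
      ∀ x : 𝓞 K, ∃ u v : 𝓞 F, (x : K) = iota F K u * (iota F K a * ω) + iota F K v)
    ↔ ∃ ε : (𝓞 F)ˣ, 0 < τ ((ε : 𝓞 F) : F) ∧
        b ^ 2 - 4 * a * c = (ε : 𝓞 F) ^ 2 * dK := by
  classical
  obtain ⟨hroot, hωim⟩ := hω
  simp only [iota_eq] at hroot hmin hgen ⊢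
  set ι : 𝓞 F →+* K := iotaR F K with hι
  have hιcoe : ∀ u : 𝓞 F, ι u = algebraMap F K (u : F) := fun u => rfl
  have hστ : ∀ u : 𝓞 F, σ (ι u) = ((τ (u : F) : ℝ) : ℂ) := by
    intro u; rw [hιcoe, hcompat]
  have hinj : Function.Injective ι := iotaR_injective F K
  -- the two square roots of the discriminants
  set δ : K := 2 * (ι a * ω) + ι b with hδdef
  set δK : K := 2 * ωK + ι bK with hδKdef
  have hδsq : δ ^ 2 = ι b ^ 2 - 4 * (ι a * ι c) := by
    linear_combination (4 * ι a) * hroot + (δ + 2 * (ι a * ω) + ι b) * hδdef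
  have hδKsq : δK ^ 2 = ι dK := by
    rw [hdK]
    simp only [map_sub, map_mul, map_pow, map_ofNat]
    linear_combination (4 : K) * hmin + (δK + 2 * ωK + ι bK) * hδKdef
  -- imaginary parts
  have hσδ : σ δ = 2 * ((τ (a : F) : ℝ) : ℂ) * σ ω + ((τ (b : F) : ℝ) : ℂ) := by
    rw [hδdef]; push_cast [map_add, map_mul, map_ofNat, hστ]; ring
  have hσδK : σ δK = 2 * σ ωK + ((τ (bK : F) : ℝ) : ℂ) := by
    rw [hδKdef]; push_cast [map_add, map_mul, map_ofNat, hστ]; ring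
  have hδim : (σ δ).im = 2 * τ (a : F) * (σ ω).im := by
    rw [hσδ]; simp [Complex.add_im, Complex.mul_im]; all_goals ring
  have hδKim : (σ δK).im = 2 * (σ ωK).im := by
    rw [hσδK]; simp [Complex.add_im]
  have hδpos : 0 < (σ δ).im := by rw [hδim]; positivity
  have hδKpos : 0 < (σ δK).im := by rw [hδKim]; positivity
  -- δ and δK are not in the image of F
  have hδKnotF : ∀ y : F, δK ≠ algebraMap F K y := by
    intro y hy
    have : (σ δK).im = 0 := by rw [hy, hcompat]; simp
    linarith
  have hδnotF : ∀ y : F, δ ≠ algebraMap F K y := by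
    intro y hy
    have : (σ δ).im = 0 := by rw [hy, hcompat]; simp
    linarith
  -- a division principle
  have hdiv : ∀ z : K, (∀ y : F, z ≠ algebraMap F K y) → ∀ p q : 𝓞 F,
      ι q * z = ι p → q = 0 := by
    intro z hz p q h
    by_contra hq
    have hq' : ι q ≠ 0 := fun h0 => hq (hinj (by rw [h0, map_zero]))
    apply hz (((p : 𝓞 F) : F) / ((q : 𝓞 F) : F))
    rw [map_div₀, ← hιcoe p, ← hιcoe q, eq_div_iff hq']
    linear_combination h
  constructor
  · rintro ⟨hint, hspan⟩
    obtain ⟨u', v', h1⟩ := hgen ⟨ι a * ω, hint⟩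
    obtain ⟨u, v, h2⟩ := hspan ⟨ωK, hωKint⟩
    replace h1 : ι a * ω = ι u' * ωK + ι v' := h1
    replace h2 : ωK = ι u * (ι a * ω) + ι v := h2
    -- δ = ι u' * δK + ι w  where  w = 2 v' + b - u' bK
    set w : 𝓞 F := 2 * v' + b - u' * bK with hw
    have hδu : δ = ι u' * δK + ι w := by
      rw [hw]
      simp only [map_sub, map_add, map_mul, map_ofNat]
      linear_combination hδdef + 2 * h1 - ι u' * hδKdef
    -- squaring forces w = 0
    have hkey : ι (2 * (u' * w)) * δK = ι (b ^ 2 - 4 * a * c - u' ^ 2 * dK - w ^ 2) := by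
      simp only [map_sub, map_mul, map_pow, map_ofNat]
      linear_combination hδsq - (δ + ι u' * δK + ι w) * hδu - (ι u') ^ 2 * hδKsq
    have hq0 : 2 * (u' * w) = 0 := hdiv δK hδKnotF _ _ hkey
    have hu'w : u' * w = 0 :=
      (mul_eq_zero.mp hq0).resolve_left (two_ne_zero)
    rcases mul_eq_zero.mp hu'w with hu'0 | hw0
    · exfalso
      apply hδnotF ((w : 𝓞 F) : F)
      rw [hδu, hu'0, map_zero, zero_mul, zero_add]
      exact hιcoe w
    rw [hw0, map_zero, add_zero] at hδu
    -- discriminant relation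
    have hdisc_eq : b ^ 2 - 4 * a * c = u' ^ 2 * dK := by
      apply hinj
      simp only [map_sub, map_mul, map_pow, map_ofNat]
      linear_combination -hδsq + (δ + ι u' * δK) * hδu + (ι u') ^ 2 * hδKsq
    -- u' is a unit
    have hkey2 : ι (1 - u * u') * δK = ι (2 * v + bK - u * b) := by
      simp only [map_sub, map_add, map_mul, map_one, map_ofNat]
      linear_combination hδKdef + 2 * h2 - ι u * hδdef + ι u * hδu
    have hone : 1 - u * u' = 0 := hdiv δK hδKnotF _ _ hkey2
    have hunit : u * u' = 1 := by linear_combination -hone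
    refine ⟨⟨u', u, by rw [mul_comm]; exact hunit, hunit⟩, ?_, ?_⟩
    · -- positivity of τ u'
      have hσ : σ δ = ((τ ((u' : 𝓞 F) : F) : ℝ) : ℂ) * σ δK := by
        rw [hδu, map_mul, hστ]
      have him : (σ δ).im = τ ((u' : 𝓞 F) : F) * (σ δK).im := by
        rw [hσ]; simp
      have hτ : τ ((u' : 𝓞 F) : F) = (σ δ).im / (σ δK).im := by
        rw [him, mul_div_assoc, div_self (ne_of_gt hδKpos), mul_one]
      simp only [Units.val_mk]
      rw [hτ]
      exact div_pos hδpos hδKpos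
    · simpa using hdisc_eq
  · rintro ⟨ε, hεpos, hεeq⟩
    set e : 𝓞 F := (ε : 𝓞 F) with he
    set einv : 𝓞 F := ((ε⁻¹ : (𝓞 F)ˣ) : 𝓞 F) with heinv
    have hee : einv * e = 1 := ε.inv_mul
    -- t = e bK - b is divisible by 2
    obtain ⟨μ, hμ2⟩ : ∃ μ : 𝓞 F, e * bK - b = 2 * μ := by
      apply half_int F b (e ^ 2 * cK - a * c)
      linear_combination -hεeq - e ^ 2 * hdK
    -- δ = ι e * δK
    have h0 : ι b ^ 2 - 4 * ι a * ι c = ι e ^ 2 * ι dK := by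
      have h0' := congrArg ι hεeq
      simpa [map_sub, map_mul, map_pow, map_ofNat] using h0'
    have hδe : δ = ι e * δK := by
      have hsq : (δ - ι e * δK) * (δ + ι e * δK) = 0 := by
        linear_combination hδsq + h0 - (ι e) ^ 2 * hδKsq
      rcases mul_eq_zero.mp hsq with h | h
      · exact sub_eq_zero.mp h
      · exfalso
        have hδeq : δ = -(ι e * δK) := eq_neg_of_add_eq_zero_left h
        have himeq : (σ δ).im = -(τ ((e : 𝓞 F) : F) * (σ δK).im) := by
          rw [hδeq, map_neg, map_mul, hστ]; simp
        nlinarith [hδpos, hδKpos, himeq, hεpos]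
    -- a ω = ι e * ωK + ι μ
    have haω : ι a * ω = ι e * ωK + ι μ := by
      have h2K : (2 : K) ≠ 0 := two_ne_zero
      apply mul_left_cancel₀ h2K
      have hμK : ι e * ι bK - ι b = 2 * ι μ := by
        have h3 := congrArg ι hμ2
        simpa [map_sub, map_mul, map_ofNat] using h3
      linear_combination hδe - hδdef + ι e * hδKdef + hμK
    constructor
    · -- integrality
      rw [haω]
      exact ((iotaR_isIntegral F K e).mul hωKint).add (iotaR_isIntegral F K μ)
    · intro x
      obtain ⟨u, v, hx⟩ := hgen x
      refine ⟨u * einv, v - u * einv * μ, ?_⟩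
      simp only [iota_eq, map_mul, map_sub]
      have heeK : ι einv * ι e = 1 := by
        rw [← map_mul, hee, map_one]
      linear_combination hx - (ι u * ι einv) * haω - (ι u * ωK) * heeK
end
end

section
/- Let Q = ax²+bxy+cy² ∈ Q_F(1, d_K) and let 𝔞 = O_F·ω_Q + O_F. Then 𝔞 is a fractional ideal of O_K. -/
open NumberField Complex Polynomial

noncomputable section

def IsFormN (F : Type) [Field F] [NumberField F] (τ : F →+* ℝ) (N : ℕ)
    (dK : 𝓞 F) (a b c : 𝓞 F) : Prop :=
  (∀ d : 𝓞 F, d ∣ a → d ∣ b → d ∣ c → IsUnit d) ∧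
  0 < τ (a : F) ∧
  b ^ 2 - 4 * a * c = dK ∧
  (∀ d : 𝓞 F, d ∣ a → d ∣ (N : 𝓞 F) → IsUnit d)

lemma aux_int_quad (K : Type) [Field K] [NumberField K] (B C y : K)
    (hB : IsIntegral ℤ B) (hC : IsIntegral ℤ C)
    (h : y ^ 2 + B * y + C = 0) : IsIntegral ℤ y := by
  let A := integralClosure ℤ K
  have hy : IsIntegral A y := by
    refine ⟨X ^ 2 + Polynomial.C (⟨B, hB⟩ : A) * X + Polynomial.C (⟨C, hC⟩ : A), ?_, ?_⟩
    · have : degree (Polynomial.C (⟨B, hB⟩ : A) * X + Polynomial.C (⟨C, hC⟩ : A)) < 2 :=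
        degree_linear_le.trans_lt (by norm_num)
      simpa [add_assoc] using monic_X_pow_add this
    · simp only [eval₂_add, eval₂_mul, eval₂_pow, eval₂_X, eval₂_C]
      convert h using 2 <;> rfl
  exact isIntegral_trans y hy

theorem stmt5 (F K : Type) [Field F] [Field K] [NumberField F] [NumberField K]
    [Algebra F K] (τ : F →+* ℝ) (σ : K →+* ℂ)
    (hcompat : ∀ x : F, σ (algebraMap F K x) = (τ x : ℂ))
    (hF_totallyReal : ∀ φ : F →+* ℂ, ∀ x : F, (φ x).im = 0)
    (hquadratic : Module.finrank F K = 2)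
    (hclass : NumberField.classNumber F = 1)
    (ωK : K) (hωKint : IsIntegral ℤ ωK) (hωKim : 0 < (σ ωK).im)
    (hgen : ∀ x : 𝓞 K, ∃ u v : 𝓞 F, (x : K) = iota F K u * ωK + iota F K v)
    (bK cK : 𝓞 F) (hmin : ωK ^ 2 + iota F K bK * ωK + iota F K cK = 0)
    (dK : 𝓞 F) (hdK : dK = bK ^ 2 - 4 * cK)
    (a b c : 𝓞 F) (hQ : IsFormN F τ 1 dK a b c)
    (ω : K) (hω : IsFormRoot F K σ a b c ω) :
    ∃ I : FractionalIdeal (nonZeroDivisors (𝓞 K)) K,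
      ∀ x : K, x ∈ (I : Submodule (𝓞 K) K) ↔
        ∃ u v : 𝓞 F, x = iota F K u * ω + iota F K v := by
  obtain ⟨hroot, him⟩ := hω
  obtain ⟨hprim, hapos, hdisc, -⟩ := hQ
  set f : 𝓞 F →+* K := (algebraMap F K).comp (algebraMap (𝓞 F) F) with hfdef
  have hiota : ∀ u : 𝓞 F, iota F K u = f u := fun u => rfl
  simp only [hiota] at hroot hmin hgen ⊢
  have hfint : ∀ u : 𝓞 F, IsIntegral ℤ (f u) := fun u =>
    IsIntegral.map (algebraMap F K).toIntAlgHom u.isIntegral_coe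
  have hfreal : ∀ u : 𝓞 F, σ (f u) = ((τ (u : F) : ℝ) : ℂ) := fun u => hcompat _
  -- discriminant identities
  have hd1 : f dK = f bK ^ 2 - 4 * f cK := by
    rw [hdK]; push_cast [map_sub, map_mul, map_pow, map_ofNat]; ring
  have hd2 : f dK = f b ^ 2 - 4 * f a * f c := by
    rw [← hdisc]; push_cast [map_sub, map_mul, map_pow, map_ofNat]; ring
  -- key identity : 2ωK + bK = 2aω + b
  have hid : 2 * ωK + f bK = 2 * f a * ω + f b := by
    have h0 : (2 * ωK + f bK - (2 * f a * ω + f b)) *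
        (2 * ωK + f bK + (2 * f a * ω + f b)) = 0 := by
      linear_combination 4 * hmin - 4 * f a * hroot - hd1 + hd2
    rcases mul_eq_zero.mp h0 with h | h
    · linear_combination h
    · exfalso
      have h1 := congrArg Complex.im (congrArg σ h)
      simp only [map_add, map_mul, map_ofNat, hfreal, map_zero, Complex.add_im,
        Complex.mul_im, Complex.ofReal_im, Complex.ofReal_re, Complex.re_ofNat,
        Complex.im_ofNat, Complex.zero_im, Complex.mul_re, zero_mul, mul_zero, add_zero, zero_add, sub_zero] at h1
      nlinarith [hωKim, him, hapos]
  -- the element m = (bK - b)/2 of 𝓞 F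
  have haωint : IsIntegral ℤ (f a * ω) := by
    refine aux_int_quad K (f b) (f (a * c)) _ (hfint b) (hfint (a * c)) ?_
    have : f (a * c) = f a * f c := map_mul f a c
    rw [this]
    linear_combination f a * hroot
  have hmint : IsIntegral ℤ (f a * ω - ωK) := haωint.sub hωKint
  have hmform : f a * ω - ωK = algebraMap F K (((bK : F) - (b : F)) / 2) := by
    have hb : algebraMap F K (b : F) = f b := rfl
    have hbK : algebraMap F K (bK : F) = f bK := rfl
    rw [map_div₀, map_sub, map_ofNat, hb, hbK, eq_div_iff (two_ne_zero : (2:K) ≠ 0)]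
    linear_combination -hid
  have hhalfint : IsIntegral ℤ (((bK : F) - (b : F)) / 2) := by
    rw [← isIntegral_algebraMap_iff (algebraMap F K).injective, ← hmform]; exact hmint
  set m : 𝓞 F := ⟨((bK : F) - (b : F)) / 2, hhalfint⟩ with hmdef
  have hfm : f m = f a * ω - ωK := by
    rw [hmform]; rfl
  have hωKeq : ωK = f a * ω - f m := by rw [hfm]; ring
  -- ωK * ω
  have hωKω : ωK * ω = -(f b + f m) * ω - f c := by
    rw [hωKeq]; linear_combination hroot
  -- the submodule
  refine ⟨⟨{ carrier := {x : K | ∃ u v : 𝓞 F, x = f u * ω + f v}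
             add_mem' := ?_
             zero_mem' := ⟨0, 0, by simp⟩
             smul_mem' := ?_ }, ?_⟩, fun x => Iff.rfl⟩
  · rintro x y ⟨u1, v1, rfl⟩ ⟨u2, v2, rfl⟩
    exact ⟨u1 + u2, v1 + v2, by rw [map_add, map_add]; ring⟩
  · rintro r x ⟨u, v, rfl⟩
    obtain ⟨p, q, hr⟩ := hgen r
    refine ⟨-(p * u * (b + m)) + p * v * a + q * u, -(p * u * c) - p * v * m + q * v, ?_⟩
    have hs : r • (f u * ω + f v) = (r : K) * (f u * ω + f v) := by
      rw [Algebra.smul_def]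
    rw [hs, hr, hωKeq]
    push_cast [map_add, map_mul, map_neg, map_sub]
    linear_combination f p * f u * hroot
  · -- IsFractional
    have hfa0 : f a ≠ 0 := by
      intro h0
      have h1 : algebraMap F K (a : F) = algebraMap F K 0 := by rw [map_zero]; exact h0
      have h2 : (a : F) = 0 := (algebraMap F K).injective h1
      rw [h2] at hapos; simp at hapos
    refine ⟨⟨f a, hfint a⟩, mem_nonZeroDivisors_of_ne_zero ?_, ?_⟩
    · intro h0
      exact hfa0 (by have h1 := congrArg (algebraMap (𝓞 K) K) h0; rw [map_zero] at h1; exact h1)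
    · rintro x ⟨u, v, rfl⟩
      refine ⟨⟨f u, hfint u⟩ * ⟨ωK, hωKint⟩ + ⟨f (u * m + a * v), hfint _⟩, ?_⟩
      have : algebraMap (𝓞 K) K (⟨f u, hfint u⟩ * ⟨ωK, hωKint⟩ + ⟨f (u * m + a * v), hfint _⟩)
          = f u * ωK + f (u * m + a * v) := rfl
      rw [this]
      have hsm : (⟨f a, hfint a⟩ : 𝓞 K) • (f u * ω + f v) = f a * (f u * ω + f v) := by
        rw [Algebra.smul_def]; rfl
      refine Eq.trans ?_ hsm.symm; rw [hωKeq]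
      push_cast [map_add, map_mul]
      ring
end
end

section
/- Let Q = ax²+bxy+cy² ∈ Q_F(1, d_K) and 𝔞 = O_F·ω_Q + O_F. Then a·𝔞·conj(𝔞) = O_K, where conj is complex conjugation on K. -/
open NumberField Complex

noncomputable section

theorem quad_int_generic {R A : Type*} [CommRing R] [CommRing A] [Algebra R A]
    (x : A) (p q : R)
    (h : x ^ 2 + algebraMap R A p * x + algebraMap R A q = 0) : IsIntegral R x := by
  refine ⟨Polynomial.X ^ 2 + Polynomial.C p * Polynomial.X + Polynomial.C q, ?_, ?_⟩
  · monicity!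
  · simpa using h

theorem quad_integral {K : Type} [Field K] [NumberField K] (x p q : K)
    (hp : IsIntegral ℤ p) (hq : IsIntegral ℤ q)
    (h : x ^ 2 + p * x + q = 0) : IsIntegral ℤ x := by
  have : IsIntegral (𝓞 K) x := quad_int_generic x (⟨p, hp⟩ : 𝓞 K) ⟨q, hq⟩ h
  exact isIntegral_trans x this

theorem iota_integral {F K : Type} [Field F] [Field K] [NumberField F] [Algebra F K]
    (u : 𝓞 F) : IsIntegral ℤ (iota F K u) :=
  (NumberField.RingOfIntegers.isIntegral_coe u).map ((algebraMap F K).toIntAlgHom)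

theorem stmt6 (F K : Type) [Field F] [Field K] [NumberField F] [NumberField K]
    [Algebra F K] (τ : F →+* ℝ) (σ : K →+* ℂ)
    (hcompat : ∀ x : F, σ (algebraMap F K x) = (τ x : ℂ))
    (hF_totallyReal : ∀ φ : F →+* ℂ, ∀ x : F, (φ x).im = 0)
    (hquadratic : Module.finrank F K = 2)
    (hclass : NumberField.classNumber F = 1)
    (ωK : K) (hωKint : IsIntegral ℤ ωK) (hωKim : 0 < (σ ωK).im)
    (hgen : ∀ x : 𝓞 K, ∃ u v : 𝓞 F, (x : K) = iota F K u * ωK + iota F K v)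
    (bK cK : 𝓞 F) (hmin : ωK ^ 2 + iota F K bK * ωK + iota F K cK = 0)
    (dK : 𝓞 F) (hdK : dK = bK ^ 2 - 4 * cK)
    -- conj : the nontrivial automorphism of K/F (complex conjugation)
    (conj : K ≃ₐ[F] K) (hconj : conj ≠ AlgEquiv.refl)
    (a b c : 𝓞 F) (hQ : IsFormN F τ 1 dK a b c)
    (ω : K) (hω : IsFormRoot F K σ a b c ω)
    -- I is the fractional ideal 𝔞 = O_F·ω_Q + O_F, J its conjugate
    (I J : FractionalIdeal (nonZeroDivisors (𝓞 K)) K)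
    (hI : ∀ x : K, x ∈ (I : Submodule (𝓞 K) K) ↔
      ∃ u v : 𝓞 F, x = iota F K u * ω + iota F K v)
    (hJ : ∀ x : K, x ∈ (J : Submodule (𝓞 K) K) ↔
      ∃ y : K, y ∈ (I : Submodule (𝓞 K) K) ∧ x = conj y) :
    FractionalIdeal.spanSingleton (nonZeroDivisors (𝓞 K)) (iota F K a) * I * J
      = 1 := by
  classical
  obtain ⟨hprim, hapos, hdisc, -⟩ := hQ
  obtain ⟨hroot, him⟩ := hω
  set A := iota F K a with hA
  set B := iota F K b with hB
  set C := iota F K c with hC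
  -- elements of F have real image under σ
  have hFreal : ∀ x : F, (σ (algebraMap F K x)).im = 0 := by
    intro x; rw [hcompat]; exact Complex.ofReal_im _
  have hωK_not : ∀ x : F, ωK ≠ algebraMap F K x := by
    intro x h
    rw [h, hFreal x] at hωKim
    exact lt_irrefl 0 hωKim
  have hω_not : ∀ x : F, ω ≠ algebraMap F K x := by
    intro x h
    rw [h, hFreal x] at him
    exact lt_irrefl 0 him
  -- a ≠ 0
  have ha0 : (a : F) ≠ 0 := by
    intro h
    rw [h, map_zero] at hapos
    exact lt_irrefl 0 hapos
  have hA0 : A ≠ 0 := by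
    simp only [hA, iota, ne_eq, map_eq_zero]
    exact ha0
  -- K is spanned over F by {1, ωK}
  have hli : LinearIndependent F ![(1 : K), ωK] := by
    rw [LinearIndependent.pair_iff]
    intro s t hst
    rw [Algebra.smul_def, Algebra.smul_def, mul_one] at hst
    by_cases ht : t = 0
    · subst ht
      rw [map_zero, zero_mul, add_zero] at hst
      exact ⟨(map_eq_zero _).mp hst, rfl⟩
    · exfalso
      apply hωK_not (-s / t)
      have ht' : algebraMap F K t ≠ 0 := fun h => ht ((map_eq_zero _).mp h)
      rw [map_div₀, map_neg]
      field_simp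
      linear_combination hst
  have hfd : FiniteDimensional F K :=
    Module.finite_of_finrank_pos (by rw [hquadratic]; norm_num)
  have hspan : Submodule.span F {(1 : K), ωK} = ⊤ := by
    apply Submodule.eq_top_of_finrank_eq
    have h1 : Set.range ![(1 : K), ωK] = {(1 : K), ωK} := by
      rw [Matrix.range_cons, Matrix.range_cons, Matrix.range_empty, Set.union_empty,
        Set.singleton_union]
    have h2 := finrank_span_eq_card hli
    rw [h1] at h2
    rw [h2, hquadratic]
    rfl
  have hdecomp : ∀ x : K, ∃ s t : F, x = algebraMap F K s * ωK + algebraMap F K t := by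
    intro x
    have hx : x ∈ Submodule.span F {(1 : K), ωK} := by rw [hspan]; trivial
    rw [Submodule.mem_span_pair] at hx
    obtain ⟨s, t, h⟩ := hx
    refine ⟨t, s, ?_⟩
    rw [← h, Algebra.smul_def, Algebra.smul_def, mul_one]
    ring
  -- conj fixed ωK computation
  have hconjmin : conj ωK ^ 2 + iota F K bK * conj ωK + iota F K cK = 0 := by
    have h := congrArg conj hmin
    simpa only [map_add, map_mul, map_pow, map_zero, iota, AlgEquiv.commutes] using h
  have hconjωK : conj ωK = -iota F K bK - ωK := by
    have hfactor : (conj ωK - ωK) * (conj ωK + ωK + iota F K bK) = 0 := by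
      linear_combination hconjmin - hmin
    rcases mul_eq_zero.mp hfactor with h | h
    · exfalso
      apply hconj
      have hfix : conj ωK = ωK := by linear_combination h
      apply AlgEquiv.ext
      intro x
      obtain ⟨s, t, rfl⟩ := hdecomp x
      simp only [map_add, map_mul, AlgEquiv.commutes, hfix, AlgEquiv.coe_refl, id_eq]
    · linear_combination h
  -- conj ω ≠ ω
  have hconjω_ne : conj ω ≠ ω := by
    intro hfix
    obtain ⟨s, t, hst⟩ := hdecomp ω
    have h1 : conj ω = algebraMap F K s * (-iota F K bK - ωK) + algebraMap F K t := by
      rw [hst, map_add, map_mul, AlgEquiv.commutes, AlgEquiv.commutes, hconjωK]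
    by_cases hs : s = 0
    · apply hω_not t
      rw [hst, hs, map_zero, zero_mul, zero_add]
    · have hs' : algebraMap F K s ≠ 0 := fun h => hs ((map_eq_zero _).mp h)
      have h2 : algebraMap F K s * (2 * ωK + iota F K bK) = 0 := by
        rw [hfix, hst] at h1
        linear_combination h1
      have h3 : (2 : K) * ωK + iota F K bK = 0 :=
        (mul_eq_zero.mp h2).resolve_left hs'
      apply hωK_not (-((bK : F) / 2))
      have h2' : (2 : K) ≠ 0 := two_ne_zero
      rw [map_neg, map_div₀, map_ofNat, ← neg_div, eq_div_iff h2']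
      simp only [iota] at h3
      linear_combination h3
  -- conj ω is the other root
  have hroot' : A * conj ω ^ 2 + B * conj ω + C = 0 := by
    have h := congrArg conj hroot
    simpa only [hA, hB, hC, map_add, map_mul, map_pow, map_zero, iota,
      AlgEquiv.commutes] using h
  have hsum : A * (ω + conj ω) = -B := by
    have hfac : (ω - conj ω) * (A * (ω + conj ω) + B) = 0 := by
      linear_combination hroot - hroot'
    rcases mul_eq_zero.mp hfac with h | h
    · exact absurd (sub_eq_zero.mp h).symm hconjω_ne
    · linear_combination h
  have hprod : A * (ω * conj ω) = C := by
    linear_combination ω * hsum - hroot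
  -- integrality facts
  have hintA : IsIntegral ℤ A := iota_integral a
  have hintB : IsIntegral ℤ B := iota_integral b
  have hintC : IsIntegral ℤ C := iota_integral c
  have hintAω : IsIntegral ℤ (A * ω) := by
    apply quad_integral (A * ω) B (A * C) hintB (hintA.mul hintC)
    linear_combination A * hroot
  have hintAω' : IsIntegral ℤ (A * conj ω) := by
    apply quad_integral (A * conj ω) B (A * C) hintB (hintA.mul hintC)
    linear_combination A * hroot'
  -- key integrality of products
  have key : ∀ x ∈ I, ∀ y ∈ J, IsIntegral ℤ (A * (x * y)) := by
    intro x hx y hy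
    obtain ⟨u, v, rfl⟩ := (hI x).mp (FractionalIdeal.mem_coe.mpr hx)
    obtain ⟨y0, hy0, rfl⟩ := (hJ y).mp (FractionalIdeal.mem_coe.mpr hy)
    obtain ⟨u', v', rfl⟩ := (hI y0).mp hy0
    have hcy : conj (iota F K u' * ω + iota F K v')
        = iota F K u' * conj ω + iota F K v' := by
      simp only [map_add, map_mul, iota, AlgEquiv.commutes]
    rw [hcy]
    have heq : A * ((iota F K u * ω + iota F K v) * (iota F K u' * conj ω + iota F K v'))
        = ((iota F K u * iota F K u') * C + (iota F K u * iota F K v') * (A * ω))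
          + ((iota F K v * iota F K u') * (A * conj ω)
          + (iota F K v * iota F K v') * A) := by
      linear_combination (iota F K u * iota F K u') * hprod
    rw [heq]
    have hu := iota_integral (F := F) (K := K)
    exact ((((hu u).mul (hu u')).mul hintC).add
      (((hu u).mul (hu v')).mul hintAω)).add
      ((((hu v).mul (hu u')).mul hintAω').add (((hu v).mul (hu v')).mul hintA))
  -- upper bound
  have hIJ_le : I * J ≤ FractionalIdeal.spanSingleton (nonZeroDivisors (𝓞 K)) A⁻¹ := by
    rw [FractionalIdeal.mul_le]
    intro x hx y hy
    rw [FractionalIdeal.mem_spanSingleton]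
    refine ⟨⟨A * (x * y), key x hx y hy⟩, ?_⟩
    show A * (x * y) * A⁻¹ = x * y
    field_simp
  have hupper : FractionalIdeal.spanSingleton (nonZeroDivisors (𝓞 K)) A * I * J ≤ 1 := by
    rw [mul_assoc, FractionalIdeal.mul_le]
    intro i hi j hj
    obtain ⟨zi, rfl⟩ := (FractionalIdeal.mem_spanSingleton _).mp hi
    obtain ⟨zj, hzj⟩ := (FractionalIdeal.mem_spanSingleton _).mp (hIJ_le hj)
    rw [FractionalIdeal.mem_one_iff]
    refine ⟨zi * zj, ?_⟩
    rw [← hzj, map_mul, Algebra.smul_def, Algebra.smul_def]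
    field_simp
  -- lower bound : 1 ∈ product
  have hPID : IsPrincipalIdealRing (𝓞 F) := NumberField.classNumber_eq_one_iff.mp hclass
  have hcombo : ∃ u v w : 𝓞 F, u * a + v * b + w * c = 1 := by
    have htop : (Ideal.span {a, b, c} : Ideal (𝓞 F)) = ⊤ := by
      obtain ⟨g, hg⟩ := (IsPrincipalIdealRing.principal
        (Ideal.span ({a, b, c} : Set (𝓞 F)))).principal
      have hmem : ∀ x ∈ ({a, b, c} : Set (𝓞 F)), g ∣ x := by
        intro x hx
        have h0 : x ∈ Submodule.span (𝓞 F) {g} := hg ▸ Ideal.subset_span hx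
        exact Ideal.mem_span_singleton.mp h0
      have hga : g ∣ a := hmem a (by simp)
      have hgb : g ∣ b := hmem b (by simp)
      have hgc : g ∣ c := hmem c (by simp)
      rw [hg]
      show Ideal.span {g} = ⊤
      rw [Ideal.span_singleton_eq_top]
      exact hprim g hga hgb hgc
    have h1 : (1 : 𝓞 F) ∈ Ideal.span ({a, b, c} : Set (𝓞 F)) := by
      rw [htop]; trivial
    rw [show ({a, b, c} : Set (𝓞 F)) = insert a (insert b {c}) from rfl,
      Ideal.mem_span_insert] at h1
    obtain ⟨u, z, hz, hz1⟩ := h1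
    rw [Ideal.mem_span_insert] at hz
    obtain ⟨v, w0, hw0, hw1⟩ := hz
    rw [Ideal.mem_span_singleton'] at hw0
    obtain ⟨w, hw⟩ := hw0
    exact ⟨u, v, w, by rw [← hw] at hw1; rw [hw1] at hz1; linear_combination hz1.symm⟩
  -- memberships
  have hωI : ω ∈ I := by
    apply FractionalIdeal.mem_coe.mp
    rw [hI]
    exact ⟨1, 0, by simp [iota]⟩
  have h1I : (1 : K) ∈ I := by
    apply FractionalIdeal.mem_coe.mp
    rw [hI]
    exact ⟨0, 1, by simp [iota]⟩
  have h1J : (1 : K) ∈ J := by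
    apply FractionalIdeal.mem_coe.mp
    rw [hJ]
    exact ⟨1, FractionalIdeal.mem_coe.mpr h1I, (map_one conj.toRingEquiv).symm⟩
  have hω'J : conj ω ∈ J := by
    apply FractionalIdeal.mem_coe.mp
    rw [hJ]
    exact ⟨ω, FractionalIdeal.mem_coe.mpr hωI, rfl⟩
  set P := FractionalIdeal.spanSingleton (nonZeroDivisors (𝓞 K)) A * I * J with hP
  have hmulP : ∀ x ∈ I, ∀ y ∈ J, A * x * y ∈ P := by
    intro x hx y hy
    exact FractionalIdeal.mul_mem_mul
      (FractionalIdeal.mul_mem_mul (FractionalIdeal.mem_spanSingleton_self _ A) hx) hy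
  have hAP : A ∈ P := by
    have h := hmulP 1 h1I 1 h1J
    rwa [mul_one, mul_one] at h
  have hCP : C ∈ P := by
    have h := hmulP ω hωI (conj ω) hω'J
    rwa [mul_assoc, hprod] at h
  have hBP : B ∈ P := by
    have h1 := hmulP ω hωI 1 h1J
    have h2 := hmulP 1 h1I (conj ω) hω'J
    rw [mul_one] at h1
    rw [mul_one] at h2
    have hB' : B = -(A * ω) - A * conj ω := by linear_combination hsum
    rw [hB']
    apply FractionalIdeal.mem_coe.mp
    exact sub_mem (neg_mem (FractionalIdeal.mem_coe.mpr h1)) (FractionalIdeal.mem_coe.mpr h2)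
  have hsmulP : ∀ (u : 𝓞 F) (x : K), x ∈ P → iota F K u * x ∈ P := by
    intro u x hx
    have : iota F K u * x = (⟨iota F K u, iota_integral u⟩ : 𝓞 K) • x := rfl
    rw [this]
    apply FractionalIdeal.mem_coe.mp
    exact Submodule.smul_mem _ _ (FractionalIdeal.mem_coe.mpr hx)
  have h1P : (1 : K) ∈ P := by
    obtain ⟨u, v, w, huvw⟩ := hcombo
    have hiota : iota F K u * A + iota F K v * B + iota F K w * C = 1 := by
      have hcast : ((u * a + v * b + w * c : 𝓞 F) : F)
          = (u : F) * a + (v : F) * b + (w : F) * c := by push_cast; ring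
      have := congrArg (algebraMap F K) (congrArg (fun x : 𝓞 F => (x : F)) huvw)
      simp only [hcast, map_add, map_mul, map_one] at this
      simpa only [hA, hB, hC, iota] using this
    rw [← hiota]
    apply FractionalIdeal.mem_coe.mp
    exact add_mem (add_mem (FractionalIdeal.mem_coe.mpr (hsmulP u A hAP))
      (FractionalIdeal.mem_coe.mpr (hsmulP v B hBP)))
      (FractionalIdeal.mem_coe.mpr (hsmulP w C hCP))
  exact le_antisymm hupper (FractionalIdeal.one_le.mpr h1P)
end
end

section
/- Let Q = ax²+bxy+cy² ∈ Q_F(1, d_K) and 𝔞 = O_F·ω_Q + O_F. Then 𝔞 is relatively prime to N·O_K if and only if gcd(a, N) = 1 in O_F. -/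
open NumberField Complex

noncomputable section

/-- A fractional ideal `I` is relatively prime to `N·O_K` : its numerator and
denominator ideals can be chosen coprime to `N·O_K`. -/
def CoprimeToN (K : Type) [Field K] [NumberField K] (N : ℕ)
    (I : FractionalIdeal (nonZeroDivisors (𝓞 K)) K) : Prop :=
  ∃ b₁ b₂ : Ideal (𝓞 K),
    IsCoprime b₁ (Ideal.span {(N : 𝓞 K)}) ∧
    IsCoprime b₂ (Ideal.span {(N : 𝓞 K)}) ∧
    I * (b₂ : FractionalIdeal (nonZeroDivisors (𝓞 K)) K)
      = (b₁ : FractionalIdeal (nonZeroDivisors (𝓞 K)) K)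

set_option maxHeartbeats 2000000 in
theorem stmt7 (F K : Type) [Field F] [Field K] [NumberField F] [NumberField K]
    [Algebra F K] (τ : F →+* ℝ) (σ : K →+* ℂ)
    (hcompat : ∀ x : F, σ (algebraMap F K x) = (τ x : ℂ))
    (hF_totallyReal : ∀ φ : F →+* ℂ, ∀ x : F, (φ x).im = 0)
    (hquadratic : Module.finrank F K = 2)
    (hclass : NumberField.classNumber F = 1)
    (ωK : K) (hωKint : IsIntegral ℤ ωK) (hωKim : 0 < (σ ωK).im)
    (hgen : ∀ x : 𝓞 K, ∃ u v : 𝓞 F, (x : K) = iota F K u * ωK + iota F K v)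
    (bK cK : 𝓞 F) (hmin : ωK ^ 2 + iota F K bK * ωK + iota F K cK = 0)
    (dK : 𝓞 F) (hdK : dK = bK ^ 2 - 4 * cK)
    (N : ℕ) (hN : 0 < N)
    (a b c : 𝓞 F) (hQ : IsFormN F τ 1 dK a b c)
    (ω : K) (hω : IsFormRoot F K σ a b c ω)
    (I : FractionalIdeal (nonZeroDivisors (𝓞 K)) K)
    (hI : ∀ x : K, x ∈ (I : Submodule (𝓞 K) K) ↔
      ∃ u v : 𝓞 F, x = iota F K u * ω + iota F K v) :
    CoprimeToN K N I ↔ (∀ d : 𝓞 F, d ∣ a → d ∣ (N : 𝓞 F) → IsUnit d) := by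
  classical
  haveI hPID : IsPrincipalIdealRing (𝓞 F) :=
    (NumberField.classNumber_eq_one_iff).mp hclass
  set j : 𝓞 F →+* 𝓞 K := RingOfIntegers.mapRingHom (algebraMap F K) with hjdef
  have hjcoe : ∀ u : 𝓞 F, ((j u : 𝓞 K) : K) = iota F K u := fun u => rfl
  have hreal : ∀ x : F, (σ (algebraMap F K x)).im = 0 := by
    intro x; rw [hcompat]; exact Complex.ofReal_im _
  have hainj : Function.Injective (algebraMap F K) := (algebraMap F K).injective
  have hiotainj : Function.Injective (iota F K) := by
    intro x y h
    exact NumberField.RingOfIntegers.ext (hainj h)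
  have hjinj : Function.Injective j := by
    intro x y h
    apply hiotainj
    rw [← hjcoe, ← hjcoe, h]
  have ha0 : a ≠ 0 := by
    intro h
    have := hQ.2.1
    rw [h] at this
    simp at this
  have haF : (a : F) ≠ 0 := fun h => ha0 (NumberField.RingOfIntegers.ext h)
  have hιa0 : iota F K a ≠ 0 := by
    simp only [iota, ne_eq, map_eq_zero]; exact haF
  -- ωK is not in the image of F
  have hnotF : ∀ (z : K), 0 < (σ z).im → ∀ x : F, z ≠ algebraMap F K x := by
    intro z hz x h
    rw [h, hreal] at hz
    exact lt_irrefl 0 hz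
  -- the element ωO
  set ωO : 𝓞 K := ⟨ωK, hωKint⟩ with hωOdef
  have hωOcoe : (ωO : K) = ωK := rfl
  have R2 : ωO ^ 2 + j bK * ωO + j cK = 0 := by
    ext; push_cast [hjcoe, hωOcoe]; exact hmin
  -- the element αO = a ω
  have halg : ∀ x : 𝓞 F, algebraMap (𝓞 F) K x = iota F K x := fun x =>
    (IsScalarTower.algebraMap_apply (𝓞 F) F K x)
  have hαint : IsIntegral ℤ (iota F K a * ω) := by
    have h1 : IsIntegral (𝓞 F) (iota F K a * ω) := by
      refine ⟨Polynomial.X ^ 2 + Polynomial.C b * Polynomial.X + Polynomial.C (a * c), ?_, ?_⟩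
      · rw [add_assoc]
        apply Polynomial.monic_X_pow_add
        apply lt_of_le_of_lt (Polynomial.degree_add_le _ _)
        refine max_lt ?_ ?_
        · exact lt_of_le_of_lt (Polynomial.degree_mul_le _ _)
            (by
              have h1 := Polynomial.degree_C_le (a := b)
              have h2 := Polynomial.degree_X_le (R := 𝓞 F)
              calc Polynomial.degree (Polynomial.C b) + Polynomial.degree (Polynomial.X (R := 𝓞 F))
                  ≤ 0 + 1 := add_le_add h1 h2
                _ < 2 := by decide)
        · exact lt_of_le_of_lt Polynomial.degree_C_le (by decide)
      · simp only [Polynomial.eval₂_add, Polynomial.eval₂_mul, Polynomial.eval₂_pow,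
          Polynomial.eval₂_X, Polynomial.eval₂_C, halg]
        have hac : iota F K (a * c) = iota F K a * iota F K c := by
          simp [iota, map_mul]
        rw [hac]
        linear_combination (iota F K a) * hω.1
    exact isIntegral_trans _ h1
  set αO : 𝓞 K := ⟨iota F K a * ω, hαint⟩ with hαOdef
  have hαOcoe : (αO : K) = iota F K a * ω := rfl
  have R1 : αO ^ 2 + j b * αO + j a * j c = 0 := by
    ext; push_cast [hjcoe, hαOcoe]
    linear_combination (iota F K a) * hω.1
  -- coordinates
  have hcoordK : ∀ x : 𝓞 K, ∃ u v : 𝓞 F, x = j u * ωO + j v := by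
    intro x
    obtain ⟨u, v, h⟩ := hgen x
    exact ⟨u, v, by ext; push_cast [hjcoe, hωOcoe]; exact h⟩
  have huniq : ∀ u v u' v' : 𝓞 F, j u * ωO + j v = j u' * ωO + j v' → u = u' ∧ v = v' := by
    intro u v u' v' h
    have hK : iota F K u * ωK + iota F K v = iota F K u' * ωK + iota F K v' := by
      have := congrArg (algebraMap (𝓞 K) K) h
      push_cast [hjcoe, hωOcoe] at this
      exact this
    have hu : u = u' := by
      by_contra hne
      have hs : ((u : F) - (u' : F)) ≠ 0 :=
        sub_ne_zero.2 fun hh => hne (NumberField.RingOfIntegers.ext hh)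
      have h2 : algebraMap F K ((u : F) - (u' : F)) * ωK
          = algebraMap F K ((v' : F) - (v : F)) := by
        simp only [map_sub, iota] at hK ⊢
        linear_combination hK
      have h3 : ωK = algebraMap F K (((u : F) - (u' : F))⁻¹ * ((v' : F) - (v : F))) := by
        have hsK : algebraMap F K ((u : F) - (u' : F)) ≠ 0 := by
          simp only [ne_eq, map_eq_zero]; exact hs
        apply mul_left_cancel₀ hsK
        rw [h2, ← map_mul]
        congr 1
        field_simp
      exact hnotF ωK hωKim _ h3
    refine ⟨hu, ?_⟩
    rw [hu] at h
    have := add_left_cancel h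
    exact hjinj this
  -- coordinates of αO and the key identity b = u * bK - 2 * v
  obtain ⟨u, v, huv⟩ := hcoordK αO
  have hu0 : u ≠ 0 := by
    intro h
    have : iota F K a * ω = iota F K v := by
      have := congrArg (algebraMap (𝓞 K) K) huv
      push_cast [hjcoe, hωOcoe, hαOcoe, h] at this
      simpa [iota] using this
    have hωF : ω = algebraMap F K ((a : F)⁻¹ * (v : F)) := by
      apply mul_left_cancel₀ hιa0
      simp only [iota] at this ⊢
      rw [this, ← map_mul]
      congr 1
      field_simp
    exact hnotF ω hω.2 _ hωF
  have hexp : j (u * (b + 2 * v - u * bK)) * ωO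
      + j (-(u ^ 2 * cK) + v ^ 2 + b * v + a * c) = 0 := by
    have h1 : j (u * (b + 2 * v - u * bK)) * ωO
        + j (-(u ^ 2 * cK) + v ^ 2 + b * v + a * c)
        = αO ^ 2 + j b * αO + j a * j c := by
      rw [huv]
      simp only [map_mul, map_add, map_sub, map_neg, map_pow, map_ofNat]
      linear_combination (-(j u ^ 2)) * R2
    rw [h1, R1]
  have hbu : b = u * bK - 2 * v := by
    have h0 : j (u * (b + 2 * v - u * bK)) * ωO + j (-(u ^ 2 * cK) + v ^ 2 + b * v + a * c)
        = j 0 * ωO + j 0 := by simpa using hexp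
    have hA := (huniq _ _ 0 0 h0).1
    have := mul_eq_zero.mp hA
    rcases this with h | h
    · exact absurd h hu0
    · linear_combination h
  -- Bezout for coprime elements
  have hcop : ∀ x y : 𝓞 F, (∀ d : 𝓞 F, d ∣ x → d ∣ y → IsUnit d) →
      ∃ s t : 𝓞 F, s * x + t * y = 1 := by
    intro x y h
    obtain ⟨g, hg⟩ := (hPID.principal (Ideal.span {x, y})).principal
    rw [Ideal.submodule_span_eq] at hg
    have hgx : g ∣ x := by
      rw [← Ideal.mem_span_singleton, ← hg]
      exact Ideal.subset_span (by simp)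
    have hgy : g ∣ y := by
      rw [← Ideal.mem_span_singleton, ← hg]
      exact Ideal.subset_span (by simp)
    have : Ideal.span ({x, y} : Set (𝓞 F)) = ⊤ := by
      rw [hg, Ideal.span_singleton_eq_top]
      exact h g hgx hgy
    have h1 : (1 : 𝓞 F) ∈ Ideal.span ({x, y} : Set (𝓞 F)) := this ▸ trivial
    exact Ideal.mem_span_pair.mp h1
  -- Bezout for a b c
  have hbez3 : ∃ x y z : 𝓞 F, x * a + y * b + z * c = 1 := by
    obtain ⟨g, hg⟩ := (hPID.principal (Ideal.span {a, b, c})).principal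
    rw [Ideal.submodule_span_eq] at hg
    have hgx : g ∣ a := by
      rw [← Ideal.mem_span_singleton, ← hg]; exact Ideal.subset_span (by simp)
    have hgy : g ∣ b := by
      rw [← Ideal.mem_span_singleton, ← hg]; exact Ideal.subset_span (by simp)
    have hgz : g ∣ c := by
      rw [← Ideal.mem_span_singleton, ← hg]; exact Ideal.subset_span (by simp)
    have htop : Ideal.span ({a, b, c} : Set (𝓞 F)) = ⊤ := by
      rw [hg, Ideal.span_singleton_eq_top]
      exact hQ.1 g hgx hgy hgz
    have h1 : (1 : 𝓞 F) ∈ Ideal.span ({a, b, c} : Set (𝓞 F)) := htop ▸ trivial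
    rw [show ({a, b, c} : Set (𝓞 F)) = insert a {b, c} by rfl, Ideal.mem_span_insert] at h1
    obtain ⟨x, z', hz', hxz⟩ := h1
    obtain ⟨y, z, hyz⟩ := Ideal.mem_span_pair.mp hz'
    exact ⟨x, y, z, by rw [hxz, ← hyz]; ring⟩
  -- the ideals
  set 𝔞 : Ideal (𝓞 K) := Ideal.span {j a, αO} with h𝔞def
  set 𝔞' : Ideal (𝓞 K) := Ideal.span {j a, αO + j b} with h𝔞'def
  have hja𝔞 : j a ∈ 𝔞 := Ideal.subset_span (by simp)
  have hja0 : j a ≠ 0 := fun h => ha0 (hjinj (by rw [h, map_zero]))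
  -- L2 : 𝔞 * 𝔞' = span {j a}
  have hprod : αO * (αO + j b) = j a * (-(j c)) := by linear_combination R1
  have L2 : 𝔞 * 𝔞' = Ideal.span {j a} := by
    rw [h𝔞def, h𝔞'def, Ideal.span_pair_mul_span_pair]
    apply le_antisymm
    · rw [Ideal.span_le]
      intro x hx
      simp only [Set.mem_insert_iff, Set.mem_singleton_iff] at hx
      rcases hx with rfl | rfl | rfl | rfl
      · exact Ideal.mem_span_singleton.mpr (dvd_mul_right _ _)
      · exact Ideal.mem_span_singleton.mpr (dvd_mul_right _ _)
      · exact Ideal.mem_span_singleton.mpr (dvd_mul_left _ _)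
      · rw [hprod]; exact Ideal.mem_span_singleton.mpr (dvd_mul_right _ _)
    · obtain ⟨x, y, z, hxyz⟩ := hbez3
      have hj1 : j x * j a + j y * j b + j z * j c = 1 := by
        have := congrArg j hxyz
        simpa only [map_add, map_mul, map_one] using this
      set S := Ideal.span ({j a * j a, j a * (αO + j b), αO * j a, αO * (αO + j b)} : Set (𝓞 K))
      have h1 : j a * j a ∈ S := Ideal.subset_span (by simp)
      have h2 : j a * (αO + j b) ∈ S := Ideal.subset_span (by simp)
      have h3 : αO * j a ∈ S := Ideal.subset_span (by simp)
      have h4 : αO * (αO + j b) ∈ S := Ideal.subset_span (by simp)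
      have hab : j a * j b ∈ S := by
        have : j a * j b = j a * (αO + j b) - αO * j a := by ring
        rw [this]; exact sub_mem h2 h3
      have hac : j a * j c ∈ S := by
        have : j a * j c = -(αO * (αO + j b)) := by linear_combination hprod
        rw [this]; exact neg_mem h4
      have hjaS : j a ∈ S := by
        have : j a = j x * (j a * j a) + j y * (j a * j b) + j z * (j a * j c) := by
          linear_combination (-(j a)) * hj1
        rw [this]
        exact add_mem (add_mem (Ideal.mul_mem_left _ _ h1) (Ideal.mul_mem_left _ _ hab))
          (Ideal.mul_mem_left _ _ hac)
      intro w hw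
      obtain ⟨q, rfl⟩ := Ideal.mem_span_singleton.mp hw
      exact Ideal.mul_mem_right _ _ hjaS
  -- membership facts in I
  have h1I : (1 : K) ∈ I := by
    rw [← FractionalIdeal.mem_coe, hI]
    exact ⟨0, 1, by simp [iota]⟩
  have hωI : ω ∈ I := by
    rw [← FractionalIdeal.mem_coe, hI]
    exact ⟨1, 0, by simp [iota]⟩
  -- L1 : ↑𝔞 = I * ↑(span {j a})
  have L1 : (𝔞 : FractionalIdeal (nonZeroDivisors (𝓞 K)) K)
      = I * ((Ideal.span {j a} : Ideal (𝓞 K)) : FractionalIdeal (nonZeroDivisors (𝓞 K)) K) := by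
    apply le_antisymm
    · intro x hx
      obtain ⟨y, hy, rfl⟩ := (FractionalIdeal.mem_coeIdeal _).mp hx
      rw [h𝔞def] at hy
      obtain ⟨z₁, z₂, hz⟩ := Ideal.mem_span_pair.mp hy
      rw [← hz, map_add]
      have m1 : algebraMap (𝓞 K) K (z₁ * j a)
          ∈ ((Ideal.span {j a} : Ideal (𝓞 K)) : FractionalIdeal (nonZeroDivisors (𝓞 K)) K) :=
        FractionalIdeal.mem_coeIdeal _ |>.mpr
          ⟨z₁ * j a, Ideal.mem_span_singleton.mpr (dvd_mul_left _ _), rfl⟩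
      have m2 : algebraMap (𝓞 K) K (z₂ * j a)
          ∈ ((Ideal.span {j a} : Ideal (𝓞 K)) : FractionalIdeal (nonZeroDivisors (𝓞 K)) K) :=
        FractionalIdeal.mem_coeIdeal _ |>.mpr
          ⟨z₂ * j a, Ideal.mem_span_singleton.mpr (dvd_mul_left _ _), rfl⟩
      have e1 : algebraMap (𝓞 K) K (z₁ * j a) = 1 * algebraMap (𝓞 K) K (z₁ * j a) :=
        (one_mul _).symm
      have e2 : algebraMap (𝓞 K) K (z₂ * αO) = ω * algebraMap (𝓞 K) K (z₂ * j a) := by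
        push_cast [hjcoe, hαOcoe]
        ring
      rw [e1, e2]
      exact (FractionalIdeal.mem_coe).mp (Submodule.add_mem _ ((FractionalIdeal.mem_coe).mpr (FractionalIdeal.mul_mem_mul h1I m1)) ((FractionalIdeal.mem_coe).mpr (FractionalIdeal.mul_mem_mul hωI m2)))
    · rw [FractionalIdeal.mul_le]
      intro i hi jj hjj
      have hi' := (hI i).mp ((FractionalIdeal.mem_coe).mpr hi)
      obtain ⟨p, q, rfl⟩ := hi'
      obtain ⟨y, hy, rfl⟩ := (FractionalIdeal.mem_coeIdeal _).mp hjj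
      obtain ⟨z, rfl⟩ := Ideal.mem_span_singleton.mp hy
      refine (FractionalIdeal.mem_coeIdeal _).mpr ⟨z * (j p * αO + j q * j a), ?_, ?_⟩
      · rw [h𝔞def, Ideal.mem_span_pair]
        exact ⟨z * j q, z * j p, by ring⟩
      · push_cast [hjcoe, hαOcoe]
        ring
  constructor
  · -- CoprimeToN → gcd(a,N) = 1
    rintro ⟨b₁, b₂, hc1, hc2, hmul⟩ d hda hdN
    have hd0 : d ≠ 0 := by
      intro h
      rw [h] at hda
      exact ha0 (zero_dvd_iff.mp hda)
    have key : 𝔞 * b₂ = Ideal.span {j a} * b₁ := by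
      apply FractionalIdeal.coeIdeal_injective (K := K)
      simp only [FractionalIdeal.coeIdeal_mul]
      rw [L1, mul_right_comm, hmul, mul_comm]
    have h𝔞0 : 𝔞 ≠ 0 := by
      intro h
      rw [h] at hja𝔞
      exact hja0 (by simpa using hja𝔞)
    have hb2 : b₂ = 𝔞' * b₁ :=
      mul_left_cancel₀ h𝔞0 (key.trans (by rw [← L2, mul_assoc]))
    have hsup : 𝔞' ⊔ Ideal.span {(N : 𝓞 K)} = ⊤ := by
      rw [eq_top_iff, ← Ideal.isCoprime_iff_sup_eq.mp hc2]
      exact sup_le_sup_right (hb2 ▸ Ideal.mul_le_left) _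
    have h1mem : (1 : 𝓞 K) ∈ 𝔞' ⊔ Ideal.span {(N : 𝓞 K)} := hsup ▸ trivial
    obtain ⟨z, hz, w, hw, hzw⟩ := Submodule.mem_sup.mp h1mem
    rw [h𝔞'def, Ideal.mem_span_pair] at hz
    obtain ⟨s, t, hst⟩ := hz
    have hcomb : s * j a + t * (αO + j b) + w = 1 := by rw [hst]; exact hzw
    set Jd : Ideal (𝓞 K) := Ideal.span {j d} with hJddef
    have hjaJ : j a ∈ Jd := Ideal.mem_span_singleton.mpr (map_dvd j hda)
    have hNJ : (N : 𝓞 K) ∈ Jd := by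
      have := map_dvd j hdN
      rw [map_natCast] at this
      exact Ideal.mem_span_singleton.mpr this
    have hwJ : w ∈ Jd := by
      obtain ⟨r, hr⟩ := Ideal.mem_span_singleton.mp hw
      rw [hr]
      exact Ideal.mul_mem_right _ _ hNJ
    have hαJ : αO ∈ Jd := by
      have hexp2 : αO = s * (j a * αO) + t * (-(j a * j c)) + αO * w := by
        linear_combination (-αO) * hcomb + t * R1
      rw [hexp2]
      refine add_mem (add_mem ?_ ?_) ?_
      · exact Ideal.mul_mem_left _ _ (Ideal.mul_mem_right _ _ hjaJ)
      · exact Ideal.mul_mem_left _ _ (neg_mem (Ideal.mul_mem_right _ _ hjaJ))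
      · exact Ideal.mul_mem_left _ _ hwJ
    obtain ⟨γ, hγ⟩ := Ideal.mem_span_singleton.mp hαJ
    obtain ⟨g₁, g₂, hg⟩ := hcoordK γ
    have hαO2 : αO = j (d * g₁) * ωO + j (d * g₂) := by
      rw [hγ, hg]
      simp only [map_mul]
      ring
    have huv2 := huniq u v (d * g₁) (d * g₂) (huv.symm.trans hαO2)
    have hdb : d ∣ b := ⟨g₁ * bK - 2 * g₂, by rw [hbu, huv2.1, huv2.2]; ring⟩
    have hjbJ : j b ∈ Jd := Ideal.mem_span_singleton.mpr (map_dvd j hdb)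
    have h1J : (1 : 𝓞 K) ∈ Jd := by
      rw [← hcomb]
      refine add_mem (add_mem ?_ ?_) hwJ
      · exact Ideal.mul_mem_left _ _ hjaJ
      · exact Ideal.mul_mem_left _ _ (add_mem hαJ hjbJ)
    have hjd_unit : IsUnit (j d) := by
      rw [← Ideal.span_singleton_eq_top]
      exact (Ideal.eq_top_iff_one _).mpr h1J
    -- transfer unit-ness down to 𝓞 F
    obtain ⟨q, hq⟩ := isUnit_iff_exists_inv.mp hjd_unit
    have hdF : (d : F) ≠ 0 := fun h => hd0 (NumberField.RingOfIntegers.ext h)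
    have hqK : algebraMap F K (d : F) * (q : K) = 1 := by
      have := congrArg (algebraMap (𝓞 K) K) hq
      push_cast [hjcoe] at this
      simpa [iota] using this
    have hqeq : (q : K) = algebraMap F K ((d : F)⁻¹) := by
      rw [map_inv₀]
      exact eq_inv_of_mul_eq_one_left (by rw [mul_comm] at hqK; exact hqK)
    have hint : IsIntegral ℤ ((d : F)⁻¹) := by
      rw [← isIntegral_algebraMap_iff (B := K) hainj, ← hqeq]
      exact q.2
    refine IsUnit.of_mul_eq_one (a := d) ⟨(d : F)⁻¹, hint⟩ ?_
    ext
    push_cast [NumberField.RingOfIntegers.coe_mk]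
    field_simp
    exact mul_one_div_cancel hdF
  · -- gcd(a,N) = 1 → CoprimeToN
    intro hrhs
    obtain ⟨s, t, hst⟩ := hcop a (N : 𝓞 F) hrhs
    have hstK : j s * j a + j t * (N : 𝓞 K) = 1 := by
      have := congrArg j hst
      simpa only [map_add, map_mul, map_one, map_natCast] using this
    refine ⟨𝔞, Ideal.span {j a}, ?_, ?_, L1.symm⟩
    · rw [Ideal.isCoprime_iff_sup_eq, eq_top_iff]
      intro x _
      have h1 : (1 : 𝓞 K) ∈ 𝔞 ⊔ Ideal.span {(N : 𝓞 K)} := by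
        rw [← hstK]
        exact add_mem
          (Submodule.mem_sup_left (Ideal.mul_mem_left _ _ hja𝔞))
          (Submodule.mem_sup_right (Ideal.mul_mem_left _ _ (Ideal.subset_span (by simp))))
      have := (Ideal.eq_top_iff_one _).mpr h1
      rw [this]; trivial
    · rw [Ideal.isCoprime_iff_sup_eq, eq_top_iff]
      intro x _
      have h1 : (1 : 𝓞 K) ∈ Ideal.span {j a} ⊔ Ideal.span {(N : 𝓞 K)} := by
        rw [← hstK]
        exact add_mem
          (Submodule.mem_sup_left (Ideal.mul_mem_left _ _ (Ideal.subset_span (by simp))))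
          (Submodule.mem_sup_right (Ideal.mul_mem_left _ _ (Ideal.subset_span (by simp))))
      have := (Ideal.eq_top_iff_one _).mpr h1
      rw [this]; trivial
end
end

section
/- Let E be a number field with ring of integers O_E and 𝔪 a nonzero proper ideal of O_E. Then the reduction map SL₂(O_E) → SL₂(O_E/𝔪) is surjective. -/
open NumberField

noncomputable section

open Matrix

/-- elementary matrix E12 -/
def myE12 {S : Type*} [CommRing S] (x : S) : Matrix.SpecialLinearGroup (Fin 2) S :=
  ⟨!![1, x; 0, 1], by simp [Matrix.det_fin_two_of]⟩

/-- elementary matrix E21 -/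
def myE21 {S : Type*} [CommRing S] (x : S) : Matrix.SpecialLinearGroup (Fin 2) S :=
  ⟨!![1, 0; x, 1], by simp [Matrix.det_fin_two_of]⟩

lemma map_myE12 {R S : Type*} [CommRing R] [CommRing S] (f : R →+* S) (x : R) :
    Matrix.SpecialLinearGroup.map (n := Fin 2) f (myE12 x) = myE12 (f x) := by
  apply Subtype.ext
  ext i j
  fin_cases i <;> fin_cases j <;>
    simp only [Matrix.SpecialLinearGroup.map_apply_coe] <;> simp [myE12, Matrix.SpecialLinearGroup.map]

lemma map_myE21 {R S : Type*} [CommRing R] [CommRing S] (f : R →+* S) (x : R) :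
    Matrix.SpecialLinearGroup.map (n := Fin 2) f (myE21 x) = myE21 (f x) := by
  apply Subtype.ext
  ext i j
  fin_cases i <;> fin_cases j <;>
    simp only [Matrix.SpecialLinearGroup.map_apply_coe] <;> simp [myE21, Matrix.SpecialLinearGroup.map]

/-- stable range one for finite commutative rings -/
lemma sr1 {S : Type*} [CommRing S] [Finite S] (a c y z : S) (h : a * y + c * z = 1) :
    ∃ t : S, IsUnit (a + t * c) := by
  classical
  have key : ∀ P : {P : Ideal S // P.IsMaximal}, ∃ tP : S, a + tP * c ∉ P.1 := by
    rintro ⟨P, hP⟩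
    by_cases hc : c ∈ P
    · refine ⟨0, fun ha => hP.ne_top ?_⟩
      rw [Ideal.eq_top_iff_one, ← h]
      exact P.add_mem (P.mul_mem_right y (by simpa using ha)) (P.mul_mem_right z hc)
    · obtain ⟨s, i, hiP, hi⟩ := hP.exists_inv hc
      refine ⟨s * (1 - a), fun hmem => hP.ne_top ?_⟩
      rw [Ideal.eq_top_iff_one]
      have h1 : (1 : S) = (a + s * (1 - a) * c) + i * (1 - a) := by
        linear_combination (a - 1) * hi
      rw [h1]
      exact P.add_mem hmem (P.mul_mem_right _ hiP)
  choose tP htP using key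
  have hcop : Pairwise (Function.onFun IsCoprime fun P : {P : Ideal S // P.IsMaximal} => P.1) := by
    intro P Q hne
    exact Ideal.isCoprime_iff_sup_eq.mpr (P.2.coprime_of_ne Q.2 (fun h => hne (Subtype.ext h)))
  obtain ⟨x, hx⟩ := Ideal.quotientInfToPiQuotient_surj hcop
    (fun P => Ideal.Quotient.mk P.1 (tP P))
  obtain ⟨t, rfl⟩ := Ideal.Quotient.mk_surjective x
  have ht : ∀ P : {P : Ideal S // P.IsMaximal},
      Ideal.Quotient.mk P.1 t = Ideal.Quotient.mk P.1 (tP P) := by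
    intro P
    have := congrFun hx P
    rwa [Ideal.quotientInfToPiQuotient_mk'] at this
  refine ⟨t, ?_⟩
  by_contra hu
  obtain ⟨M, hM, hle⟩ := Ideal.exists_le_maximal (Ideal.span {a + t * c})
    (fun h => hu (Ideal.span_singleton_eq_top.mp h))
  have hmem : a + t * c ∈ M := hle (Ideal.mem_span_singleton_self _)
  apply htP ⟨M, hM⟩
  have hd : t - tP ⟨M, hM⟩ ∈ M := Ideal.Quotient.eq.mp (ht ⟨M, hM⟩)
  have heq : a + tP ⟨M, hM⟩ * c = (a + t * c) - (t - tP ⟨M, hM⟩) * c := by ring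
  rw [heq]
  exact M.sub_mem hmem (M.mul_mem_right c hd)

lemma SL2_map_surjective {R S : Type*} [CommRing R] [CommRing S] [Finite S]
    (f : R →+* S) (hf : Function.Surjective f) :
    Function.Surjective (Matrix.SpecialLinearGroup.map (n := Fin 2) f) := by
  classical
  set φ := Matrix.SpecialLinearGroup.map (n := Fin 2) f with hφ
  have h12 : ∀ x : S, myE12 x ∈ φ.range := by
    intro x
    obtain ⟨X, rfl⟩ := hf x
    exact ⟨myE12 X, map_myE12 f X⟩
  have h21 : ∀ x : S, myE21 x ∈ φ.range := by
    intro x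
    obtain ⟨X, rfl⟩ := hf x
    exact ⟨myE21 X, map_myE21 f X⟩
  -- upper triangular matrices are in range
  have htri : ∀ g : Matrix.SpecialLinearGroup (Fin 2) S, (g : Matrix (Fin 2) (Fin 2) S) 1 0 = 0 →
      g ∈ φ.range := by
    intro g h0
    obtain ⟨u, b, v, hdet, hg⟩ : ∃ u b v : S, u * v = 1 ∧
        (g : Matrix (Fin 2) (Fin 2) S) = !![u, b; 0, v] := by
      refine ⟨(g : Matrix (Fin 2) (Fin 2) S) 0 0, (g : Matrix (Fin 2) (Fin 2) S) 0 1,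
        (g : Matrix (Fin 2) (Fin 2) S) 1 1, ?_, ?_⟩
      · have := g.2
        rw [Matrix.det_fin_two, h0] at this
        linear_combination this
      · rw [← h0]
        exact Matrix.eta_fin_two _
    have hgeq : g = myE12 u * myE21 (-v) * myE12 u * myE12 (-1) * myE21 1 * myE12 (-1)
        * myE12 (v * b) := by
      apply Subtype.ext
      show (g : Matrix (Fin 2) (Fin 2) S) = _
      rw [hg]
      ext i j
      fin_cases i <;> fin_cases j <;>
        simp only [Matrix.SpecialLinearGroup.coe_mul] <;> simp [myE12, myE21, Matrix.mul_apply, Fin.sum_univ_two] <;>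
        first
        | linear_combination u * hdet
        | linear_combination hdet
        | linear_combination (v * b) * hdet
        | linear_combination (u + u * u * v) * hdet
        | linear_combination (u * v * b + b) * hdet
        | linear_combination (b * u * v - b - 1) * hdet
    rw [hgeq]
    exact mul_mem (mul_mem (mul_mem (mul_mem (mul_mem (mul_mem (h12 u) (h21 (-v))) (h12 u))
      (h12 (-1))) (h21 1)) (h12 (-1))) (h12 (v * b))
  intro g
  rw [← MonoidHom.mem_range (f := φ)]
  obtain ⟨a, b, c, d, hdet, hg⟩ : ∃ a b c d : S, a * d - b * c = 1 ∧
      (g : Matrix (Fin 2) (Fin 2) S) = !![a, b; c, d] := by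
    refine ⟨(g : Matrix (Fin 2) (Fin 2) S) 0 0, (g : Matrix (Fin 2) (Fin 2) S) 0 1,
      (g : Matrix (Fin 2) (Fin 2) S) 1 0, (g : Matrix (Fin 2) (Fin 2) S) 1 1, ?_, ?_⟩
    · have := g.2
      rwa [Matrix.det_fin_two] at this
    · exact Matrix.eta_fin_two _
  obtain ⟨t, hunit⟩ := sr1 a c d (-b) (by linear_combination hdet)
  obtain ⟨w, hw⟩ := hunit.exists_right_inv
  set g2 := myE21 (-(c * w)) * (myE12 t * g) with hg2
  have h0 : (g2 : Matrix (Fin 2) (Fin 2) S) 1 0 = 0 := by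
    rw [hg2]
    show ((myE21 (-(c * w)) : Matrix (Fin 2) (Fin 2) S) *
      ((myE12 t : Matrix (Fin 2) (Fin 2) S) * (g : Matrix (Fin 2) (Fin 2) S))) 1 0 = 0
    rw [hg]
    simp [myE12, myE21, Matrix.mul_apply, Fin.sum_univ_two]
    first
    | linear_combination (-c) * hw
  have hmem2 := htri g2 h0
  have hfin : g = (myE12 t)⁻¹ * ((myE21 (-(c * w)))⁻¹ * g2) := by
    rw [hg2]; group
  rw [hfin]
  exact mul_mem (inv_mem (h12 t)) (mul_mem (inv_mem (h21 (-(c * w)))) hmem2)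

/-- strong approximation: for a number field `E` and a nonzero
proper ideal `𝔪` of `O_E`, the reduction `SL₂(O_E) → SL₂(O_E/𝔪)` is
surjective. -/
theorem stmt11 (E : Type) [Field E] [NumberField E]
    (m : Ideal (𝓞 E)) (hm : m ≠ ⊥) (hm' : m ≠ ⊤) :
    Function.Surjective
      (Matrix.SpecialLinearGroup.map (n := Fin 2) (Ideal.Quotient.mk m)) := by
  letI : Fintype ((𝓞 E) ⧸ m) := @Fintype.ofFinite _ (Ideal.finiteQuotientOfFreeOfNeBot m hm)
  haveI : Finite ((𝓞 E) ⧸ m) := Finite.of_fintype _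
  exact SL2_map_surjective _ Ideal.Quotient.mk_surjective
end
end

section
/- For Q, Q' ∈ Q_F(N, d_K): [Q] = [Q'] in C_F(N, d_K) if and only if −conj(ω_Q) = γ(−conj(ω_{Q'})) for some γ ∈ Γ_{F,1}(N), where conj denotes complex conjugation. -/
open NumberField Complex

noncomputable section

def IsGammaN (F : Type) [Field F] [NumberField F] (τ : F →+* ℝ) (N : ℕ)
    (γ : Matrix (Fin 2) (Fin 2) (𝓞 F)) : Prop :=
  IsUnit γ.det ∧ 0 < τ (γ.det : F) ∧
    (N : 𝓞 F) ∣ γ 1 0 ∧ ∃ ζ : (𝓞 F)ˣ, (N : 𝓞 F) ∣ (γ 1 1 - (ζ : 𝓞 F))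

def FormAct (F : Type) [Field F] [NumberField F]
    (γ : Matrix (Fin 2) (Fin 2) (𝓞 F)) (a b c a' b' c' : 𝓞 F) : Prop :=
  γ.det * a' = a * γ 0 0 ^ 2 + b * γ 0 0 * γ 1 0 + c * γ 1 0 ^ 2 ∧
  γ.det * b' = 2 * a * γ 0 0 * γ 0 1 + b * (γ 0 0 * γ 1 1 + γ 0 1 * γ 1 0)
      + 2 * c * γ 1 0 * γ 1 1 ∧
  γ.det * c' = a * γ 0 1 ^ 2 + b * γ 0 1 * γ 1 1 + c * γ 1 1 ^ 2

lemma vieta' {K : Type} [Field K] {A B C x y : K} (hxy : x ≠ y)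
    (h1 : A*x^2+B*x+C=0) (h2 : A*y^2+B*y+C=0) : B = -(A*(x+y)) ∧ C = A*(x*y) := by
  have h3 : (x-y)*(A*(x+y)+B) = 0 := by linear_combination h1 - h2
  have h4 : A*(x+y)+B = 0 := by
    rcases mul_eq_zero.1 h3 with h|h
    · exact absurd (sub_eq_zero.1 h) hxy
    · exact h
  refine ⟨by linear_combination h4, by linear_combination h1 - x*h4⟩

lemma posdefaux {ta tb tc x y : ℝ} (ha : 0 < ta) (hd : tb^2 - 4*ta*tc < 0)
    (hxy : ¬(x = 0 ∧ y = 0)) : 0 < ta*x^2 + tb*x*y + tc*y^2 := by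
  rcases eq_or_ne y 0 with hy|hy
  · have hx : x ≠ 0 := by tauto
    subst hy
    have : 0 < x^2 := by positivity
    nlinarith
  · have : 0 < y^2 := by positivity
    nlinarith [sq_nonneg (2*ta*x + tb*y)]

lemma discneg {ta tb tc : ℝ} {s : ℂ} (ha : 0 < ta) (him : 0 < s.im)
    (h : (ta:ℂ)*s^2 + tb*s + tc = 0) : tb^2 - 4*ta*tc < 0 := by
  have h1 := congrArg Complex.re h
  have h2 := congrArg Complex.im h
  simp [Complex.add_re, Complex.add_im, Complex.mul_re, Complex.mul_im, pow_two] at h1 h2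
  have htb : tb = -(2*ta*s.re) := by
    have h5 : s.im * (2*ta*s.re + tb) = 0 := by linarith [h2]
    rcases mul_eq_zero.1 h5 with h|h
    · linarith
    · linarith
  nlinarith [mul_pos (mul_pos ha ha) (mul_pos him him)]

lemma mobius_im_pos {p q r s : ℝ} {u : ℂ} (hdet : 0 < p*s - q*r) (him : 0 < u.im)
    (hden : (r:ℂ)*u + s ≠ 0) : 0 < (((p:ℂ)*u + q)/((r:ℂ)*u + s)).im := by
  rw [Complex.div_im, div_sub_div_same]
  apply div_pos
  · have h : ((p:ℂ)*u+q).im * ((r:ℂ)*u+s).re - ((p:ℂ)*u+q).re * ((r:ℂ)*u+s).im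
        = (p*s-q*r)*u.im := by
      simp [Complex.add_re, Complex.add_im, Complex.mul_re, Complex.mul_im]
      ring
    rw [h]; exact mul_pos hdet him
  · exact Complex.normSq_pos.mpr hden

lemma central_aux (F K : Type) [Field F] [Field K] [NumberField F] [Algebra F K]
    (τ : F →+* ℝ) (σ : K →+* ℂ)
    (hcompat : ∀ x : F, σ (algebraMap F K x) = (τ x : ℂ))
    (conj : K ≃ₐ[F] K) (hσconj : ∀ x : K, σ (conj x) = starRingEnd ℂ (σ x))
    (dK a b c a' b' c' : 𝓞 F)
    (ha : 0 < τ (a:F)) (hd : b^2 - 4*a*c = dK)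
    (ha' : 0 < τ (a':F)) (hd' : b'^2 - 4*a'*c' = dK)
    (ω ω' : K)
    (hωeq : iota F K a * ω^2 + iota F K b * ω + iota F K c = 0) (hωim : 0 < (σ ω).im)
    (hω'eq : iota F K a' * ω'^2 + iota F K b' * ω' + iota F K c' = 0)
    (hω'im : 0 < (σ ω').im)
    (al be g d : 𝓞 F) (hu : IsUnit (al*d - be*g)) (hp : 0 < τ ((al*d - be*g : 𝓞 F):F)) :
    ((al*d-be*g)*a' = a*al^2 + b*al*g + c*g^2 ∧
     (al*d-be*g)*b' = 2*a*al*be + b*(al*d + be*g) + 2*c*g*d ∧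
     (al*d-be*g)*c' = a*be^2 + b*be*d + c*d^2)
    ↔ (iota F K g * ω' + iota F K d ≠ 0 ∧
       ω = (iota F K al * ω' + iota F K be)/(iota F K g * ω' + iota F K d)) := by
  have hσι : ∀ x : 𝓞 F, σ (iota F K x) = (τ (x:F) : ℂ) := fun x => hcompat (x:F)
  have hconjι : ∀ x : 𝓞 F, conj (iota F K x) = iota F K x := fun x => conj.commutes (x:F)
  have hmul : ∀ x y : 𝓞 F, iota F K (x*y) = iota F K x * iota F K y :=
    fun x y => map_mul ((algebraMap F K).comp (algebraMap (𝓞 F) F)) x y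
  have hadd : ∀ x y : 𝓞 F, iota F K (x+y) = iota F K x + iota F K y :=
    fun x y => map_add ((algebraMap F K).comp (algebraMap (𝓞 F) F)) x y
  have hsub : ∀ x y : 𝓞 F, iota F K (x-y) = iota F K x - iota F K y :=
    fun x y => map_sub ((algebraMap F K).comp (algebraMap (𝓞 F) F)) x y
  have hpow : ∀ (x : 𝓞 F) (n : ℕ), iota F K (x^n) = iota F K x ^ n :=
    fun x n => map_pow ((algebraMap F K).comp (algebraMap (𝓞 F) F)) x n
  have htwo : iota F K 2 = 2 := map_ofNat ((algebraMap F K).comp (algebraMap (𝓞 F) F)) 2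
  have hιinj : Function.Injective (iota F K) :=
    fun x y h => NumberField.RingOfIntegers.coe_injective ((algebraMap F K).injective h)
  have hι0 : iota F K 0 = 0 := map_zero ((algebraMap F K).comp (algebraMap (𝓞 F) F))
  have hιne0 : ∀ x : 𝓞 F, x ≠ 0 → iota F K x ≠ 0 := by
    intro x hx h
    exact hx (hιinj (h.trans hι0.symm))
  have hρmul : ∀ x y : 𝓞 F, τ ((x*y : 𝓞 F):F) = τ (x:F) * τ (y:F) :=
    fun x y => map_mul (τ.comp (algebraMap (𝓞 F) F)) x y
  have hρadd : ∀ x y : 𝓞 F, τ ((x+y : 𝓞 F):F) = τ (x:F) + τ (y:F) :=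
    fun x y => map_add (τ.comp (algebraMap (𝓞 F) F)) x y
  have hρsub : ∀ x y : 𝓞 F, τ ((x-y : 𝓞 F):F) = τ (x:F) - τ (y:F) :=
    fun x y => map_sub (τ.comp (algebraMap (𝓞 F) F)) x y
  have hρneg : ∀ x : 𝓞 F, τ ((-x : 𝓞 F):F) = -(τ (x:F)) :=
    fun x => map_neg (τ.comp (algebraMap (𝓞 F) F)) x
  have hρpow : ∀ (x : 𝓞 F) (n : ℕ), τ ((x^n : 𝓞 F):F) = τ (x:F) ^ n :=
    fun x n => map_pow (τ.comp (algebraMap (𝓞 F) F)) x n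
  have hρ0 : τ ((0 : 𝓞 F):F) = 0 := map_zero (τ.comp (algebraMap (𝓞 F) F))
  have hτ0 : ∀ x : 𝓞 F, τ (x:F) = 0 → x = 0 := by
    intro x hx
    have h1 : (x:F) = 0 := τ.injective (by simpa using hx)
    have h2 : iota F K x = 0 := by
      show algebraMap F K (x:F) = 0
      rw [h1, map_zero]
    exact hιinj (h2.trans hι0.symm)
  have hane : a ≠ 0 := fun h => by rw [h] at ha; rw [hρ0] at ha; exact lt_irrefl _ ha
  have ha'ne : a' ≠ 0 := fun h => by rw [h] at ha'; rw [hρ0] at ha'; exact lt_irrefl _ ha'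
  have hAne : iota F K a ≠ 0 := hιne0 a hane
  have hA'ne : iota F K a' ≠ 0 := hιne0 a' ha'ne
  have hωne : ω ≠ conj ω := by
    intro h
    have h2 : (σ (conj ω)).im = -(σ ω).im := by rw [hσconj]; exact Complex.conj_im _
    rw [← h] at h2
    linarith
  have hω'ne : ω' ≠ conj ω' := by
    intro h
    have h2 : (σ (conj ω')).im = -(σ ω').im := by rw [hσconj]; exact Complex.conj_im _
    rw [← h] at h2
    linarith
  have hωconjeq : iota F K a * (conj ω)^2 + iota F K b * (conj ω) + iota F K c = 0 := by
    have h := congrArg conj hωeq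
    simpa [map_add, map_mul, map_pow, hconjι] using h
  have hω'conjeq : iota F K a' * (conj ω')^2 + iota F K b' * (conj ω') + iota F K c' = 0 := by
    have h := congrArg conj hω'eq
    simpa [map_add, map_mul, map_pow, hconjι] using h
  obtain ⟨hB, hC⟩ := vieta' hωne hωeq hωconjeq
  obtain ⟨hB', hC'⟩ := vieta' hω'ne hω'eq hω'conjeq
  have hρdisc : τ (b:F)^2 - 4*τ (a:F)*τ (c:F) < 0 := by
    apply discneg ha hωim
    have h := congrArg σ hωeq
    simpa [map_add, map_mul, map_pow, hσι] using h
  have hdKτ : τ ((dK:𝓞 F):F) < 0 := by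
    rw [← hd]
    calc τ ((b^2 - 4*a*c : 𝓞 F):F) = τ (b:F)^2 - 4*τ (a:F)*τ (c:F) := by
          rw [hρsub, hρpow, hρmul, hρmul,
            show τ ((4:𝓞 F):F) = 4 from map_ofNat (τ.comp (algebraMap (𝓞 F) F)) 4]
      _ < 0 := hρdisc
  have hdKne : dK ≠ 0 := fun h => by rw [h, hρ0] at hdKτ; exact lt_irrefl _ hdKτ
  have hdetne : al*d - be*g ≠ 0 := hu.ne_zero
  have hιdetne : iota F K (al*d-be*g) ≠ 0 := hιne0 _ hdetne
  constructor
  · rintro ⟨e1, e2, e3⟩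
    have k1 := congrArg (iota F K) e1
    have k2 := congrArg (iota F K) e2
    have k3 := congrArg (iota F K) e3
    simp only [hmul, hadd, hsub, hpow, htwo] at k1 k2 k3
    have key : ∀ x : K, iota F K a * (iota F K al * x + iota F K be)^2
        + iota F K b * (iota F K al * x + iota F K be) * (iota F K g * x + iota F K d)
        + iota F K c * (iota F K g * x + iota F K d)^2
        = (iota F K al * iota F K d - iota F K be * iota F K g) *
          (iota F K a' * x^2 + iota F K b' * x + iota F K c') := by
      intro x
      linear_combination -(x^2 * k1) - x * k2 - k3
    have hval : iota F K a * (iota F K al * ω' + iota F K be)^2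
        + iota F K b * (iota F K al * ω' + iota F K be) * (iota F K g * ω' + iota F K d)
        + iota F K c * (iota F K g * ω' + iota F K d)^2 = 0 := by
      rw [key ω', hω'eq, mul_zero]
    have hden : iota F K g * ω' + iota F K d ≠ 0 := by
      intro h0
      have hnum : iota F K al * ω' + iota F K be = 0 := by
        have h1 : iota F K a * (iota F K al * ω' + iota F K be)^2 = 0 := by
          linear_combination hval - (iota F K b * (iota F K al * ω' + iota F K be)
            + iota F K c * (iota F K g * ω' + iota F K d)) * h0
        rcases mul_eq_zero.1 h1 with h|h
        · exact absurd h hAne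
        · exact pow_eq_zero_iff (two_ne_zero) |>.1 h
      apply hιdetne
      have h2 : iota F K (al*d-be*g) = iota F K al * (iota F K g * ω' + iota F K d)
          - iota F K g * (iota F K al * ω' + iota F K be) := by
        simp only [hsub, hmul]; ring
      rw [h2, h0, hnum]
      ring
    refine ⟨hden, ?_⟩
    have hz : iota F K a * ((iota F K al * ω' + iota F K be)/(iota F K g * ω' + iota F K d))^2
        + iota F K b * ((iota F K al * ω' + iota F K be)/(iota F K g * ω' + iota F K d))
        + iota F K c = 0 := by
      rw [div_pow, mul_div_assoc', mul_div_assoc', div_add_div _ _ (pow_ne_zero 2 hden) hden,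
        div_add' _ _ _ (mul_ne_zero (pow_ne_zero 2 hden) hden), div_eq_zero_iff]
      left
      linear_combination (iota F K g * ω' + iota F K d) * hval
    have hfac : iota F K a
        * ((iota F K al * ω' + iota F K be)/(iota F K g * ω' + iota F K d) - ω)
        * ((iota F K al * ω' + iota F K be)/(iota F K g * ω' + iota F K d) - conj ω) = 0 := by
      linear_combination hz
        - ((iota F K al * ω' + iota F K be)/(iota F K g * ω' + iota F K d)) * hB - hC
    rcases mul_eq_zero.1 hfac with h|h
    · rcases mul_eq_zero.1 h with h'|h'
      · exact absurd h' hAne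
      · exact (sub_eq_zero.1 h').symm
    · exfalso
      have hz_eq : (iota F K al * ω' + iota F K be)/(iota F K g * ω' + iota F K d)
          = conj ω := sub_eq_zero.1 h
      have him : 0 < (σ ((iota F K al * ω' + iota F K be)/(iota F K g * ω' + iota F K d))).im := by
        rw [map_div₀]
        have h1 : σ (iota F K al * ω' + iota F K be)
            = ((τ (al:F):ℂ)) * σ ω' + ((τ (be:F):ℂ)) := by
          simp only [map_add, map_mul, hσι]
        have h2 : σ (iota F K g * ω' + iota F K d)
            = ((τ (g:F):ℂ)) * σ ω' + ((τ (d:F):ℂ)) := by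
          simp only [map_add, map_mul, hσι]
        rw [h1, h2]
        apply mobius_im_pos ?_ hω'im ?_
        · have h3 : τ (al:F) * τ (d:F) - τ (be:F) * τ (g:F) = τ ((al*d-be*g : 𝓞 F):F) := by
            rw [hρsub, hρmul, hρmul]
          rw [h3]; exact hp
        · rw [← h2]
          intro hh
          exact hden (σ.injective (by rw [hh, map_zero]))
      rw [hz_eq, hσconj] at him
      simp only [Complex.conj_im] at him
      linarith
  · rintro ⟨hden, heq⟩
    rw [eq_div_iff hden] at heq
    have hv1 : iota F K a * (iota F K al * ω' + iota F K be)^2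
        + iota F K b * (iota F K al * ω' + iota F K be) * (iota F K g * ω' + iota F K d)
        + iota F K c * (iota F K g * ω' + iota F K d)^2 = 0 := by
      linear_combination (iota F K g * ω' + iota F K d)^2 * hωeq
        - (iota F K a * ((iota F K al * ω' + iota F K be) + ω * (iota F K g * ω' + iota F K d))
          + iota F K b * (iota F K g * ω' + iota F K d)) * heq
    have hv2 : iota F K a * (iota F K al * conj ω' + iota F K be)^2
        + iota F K b * (iota F K al * conj ω' + iota F K be)
          * (iota F K g * conj ω' + iota F K d)
        + iota F K c * (iota F K g * conj ω' + iota F K d)^2 = 0 := by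
      have h := congrArg conj hv1
      simpa [map_add, map_mul, map_pow, hconjι] using h
    have hp1 : iota F K (a*al^2 + b*al*g + c*g^2) * ω'^2
        + iota F K (2*a*al*be + b*(al*d + be*g) + 2*c*g*d) * ω'
        + iota F K (a*be^2 + b*be*d + c*d^2) = 0 := by
      simp only [hmul, hadd, hpow, htwo]
      linear_combination hv1
    have hp2 : iota F K (a*al^2 + b*al*g + c*g^2) * (conj ω')^2
        + iota F K (2*a*al*be + b*(al*d + be*g) + 2*c*g*d) * (conj ω')
        + iota F K (a*be^2 + b*be*d + c*d^2) = 0 := by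
      simp only [hmul, hadd, hpow, htwo]
      linear_combination hv2
    have hA0pos : 0 < τ ((a*al^2 + b*al*g + c*g^2 : 𝓞 F):F) := by
      have hτe : τ ((a*al^2 + b*al*g + c*g^2 : 𝓞 F):F)
          = τ (a:F)*τ (al:F)^2 + τ (b:F)*τ (al:F)*τ (g:F) + τ (c:F)*τ (g:F)^2 := by
        simp only [hρadd, hρmul, hρpow]
      rw [hτe]
      apply posdefaux ha hρdisc
      rintro ⟨h1, h2⟩
      exact hdetne (by rw [hτ0 al h1, hτ0 g h2]; ring)
    have hA0ne : (a*al^2 + b*al*g + c*g^2 : 𝓞 F) ≠ 0 := by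
      intro h
      rw [h, hρ0] at hA0pos
      exact lt_irrefl _ hA0pos
    obtain ⟨hB0, hC0⟩ := vieta' hω'ne hp1 hp2
    have hcross1K : iota F K a' * iota F K (2*a*al*be + b*(al*d + be*g) + 2*c*g*d)
        = iota F K (a*al^2 + b*al*g + c*g^2) * iota F K b' := by
      linear_combination iota F K a' * hB0 - iota F K (a*al^2 + b*al*g + c*g^2) * hB'
    have hcross2K : iota F K a' * iota F K (a*be^2 + b*be*d + c*d^2)
        = iota F K (a*al^2 + b*al*g + c*g^2) * iota F K c' := by
      linear_combination iota F K a' * hC0 - iota F K (a*al^2 + b*al*g + c*g^2) * hC'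
    have hcross1 : a' * (2*a*al*be + b*(al*d + be*g) + 2*c*g*d)
        = (a*al^2 + b*al*g + c*g^2) * b' :=
      hιinj (by rw [hmul, hmul]; exact hcross1K)
    have hcross2 : a' * (a*be^2 + b*be*d + c*d^2)
        = (a*al^2 + b*al*g + c*g^2) * c' :=
      hιinj (by rw [hmul, hmul]; exact hcross2K)
    have hkey : ((a*al^2 + b*al*g + c*g^2) - (al*d-be*g)*a')
        * ((a*al^2 + b*al*g + c*g^2) + (al*d-be*g)*a') * dK = 0 := by
      linear_combination (a'^2*(al*d-be*g)^2) * hd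
        - (a*al^2 + b*al*g + c*g^2)^2 * hd'
        - (a'*(2*a*al*be + b*(al*d + be*g) + 2*c*g*d)
            + (a*al^2 + b*al*g + c*g^2)*b') * hcross1
        + 4*(a*al^2 + b*al*g + c*g^2)*a' * hcross2
    have hsq : ((a*al^2 + b*al*g + c*g^2) - (al*d-be*g)*a')
        * ((a*al^2 + b*al*g + c*g^2) + (al*d-be*g)*a') = 0 := by
      rcases mul_eq_zero.1 hkey with h|h
      · exact h
      · exact absurd h hdKne
    have he1 : (al*d-be*g)*a' = a*al^2 + b*al*g + c*g^2 := by
      rcases mul_eq_zero.1 hsq with h|h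
      · exact (sub_eq_zero.1 h).symm
      · exfalso
        have hXeq : (a*al^2 + b*al*g + c*g^2 : 𝓞 F) = -((al*d-be*g)*a') :=
          eq_neg_of_add_eq_zero_left h
        rw [hXeq, hρneg, hρmul] at hA0pos
        nlinarith [mul_pos hp ha']
    have he2 : (al*d-be*g)*b' = 2*a*al*be + b*(al*d + be*g) + 2*c*g*d := by
      have h : a' * ((2*a*al*be + b*(al*d + be*g) + 2*c*g*d) - (al*d-be*g)*b') = 0 := by
        linear_combination hcross1 - b' * he1
      rcases mul_eq_zero.1 h with h'|h'
      · exact absurd h' ha'ne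
      · exact (sub_eq_zero.1 h').symm
    have he3 : (al*d-be*g)*c' = a*be^2 + b*be*d + c*d^2 := by
      have h : a' * ((a*be^2 + b*be*d + c*d^2) - (al*d-be*g)*c') = 0 := by
        linear_combination hcross2 - c' * he1
      rcases mul_eq_zero.1 h with h'|h'
      · exact absurd h' ha'ne
      · exact (sub_eq_zero.1 h').symm
    exact ⟨he1, he2, he3⟩

lemma conjrel_aux (F K : Type) [Field F] [Field K] [NumberField F] [Algebra F K]
    (σ : K →+* ℂ) (conj : K ≃ₐ[F] K)
    (hσconj : ∀ x : K, σ (conj x) = starRingEnd ℂ (σ x))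
    (ω ω' : K) (al be g d : 𝓞 F) :
    (iota F K g * (-(conj ω')) + iota F K d ≠ 0 ∧
      -(conj ω) = (iota F K al * (-(conj ω')) + iota F K be) /
        (iota F K g * (-(conj ω')) + iota F K d))
    ↔ (-(iota F K g) * ω' + iota F K d ≠ 0 ∧
       ω = (iota F K al * ω' - iota F K be)/(-(iota F K g) * ω' + iota F K d)) := by
  have hconjι : ∀ x : 𝓞 F, conj (iota F K x) = iota F K x := fun x => conj.commutes (x:F)
  have hconj2 : ∀ x : K, conj (conj x) = x := fun x =>
    σ.injective (by rw [hσconj, hσconj, Complex.conj_conj])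
  have hD : conj (iota F K g * (-(conj ω')) + iota F K d)
      = -(iota F K g) * ω' + iota F K d := by
    rw [map_add, map_mul, map_neg, hconj2, hconjι, hconjι]; ring
  have hN : conj (iota F K al * (-(conj ω')) + iota F K be)
      = -(iota F K al * ω' - iota F K be) := by
    rw [map_add, map_mul, map_neg, hconj2, hconjι, hconjι]; ring
  have hW : conj (-(conj ω)) = -ω := by rw [map_neg, hconj2]
  constructor
  · rintro ⟨hd0, he⟩
    have hd2 : -(iota F K g) * ω' + iota F K d ≠ 0 := by
      rw [← hD]
      intro h
      exact hd0 (conj.injective (h.trans (map_zero conj).symm))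
    rw [eq_div_iff hd0] at he
    have h2 := congrArg conj he
    rw [map_mul, hD, hN, hW] at h2
    refine ⟨hd2, (eq_div_iff hd2).2 ?_⟩
    linear_combination -h2
  · rintro ⟨hd2, he⟩
    have hd0 : iota F K g * (-(conj ω')) + iota F K d ≠ 0 := by
      intro h
      apply hd2
      rw [← hD, h, map_zero]
    rw [eq_div_iff hd2] at he
    have h2 := congrArg conj he
    have hD' : conj (-(iota F K g) * ω' + iota F K d)
        = iota F K g * (-(conj ω')) + iota F K d := by
      rw [map_add, map_mul, map_neg, hconjι, hconjι]; ring
    have hN' : conj (iota F K al * ω' - iota F K be)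
        = -(iota F K al * (-(conj ω')) + iota F K be) := by
      rw [map_sub, map_mul, hconjι, hconjι]; ring
    rw [map_mul, hD', hN'] at h2
    refine ⟨hd0, (eq_div_iff hd0).2 ?_⟩
    linear_combination -h2

theorem stmt12 (F K : Type) [Field F] [Field K] [NumberField F] [NumberField K]
    [Algebra F K] (τ : F →+* ℝ) (σ : K →+* ℂ)
    (hcompat : ∀ x : F, σ (algebraMap F K x) = (τ x : ℂ))
    (hF_totallyReal : ∀ φ : F →+* ℂ, ∀ x : F, (φ x).im = 0)
    (hquadratic : Module.finrank F K = 2)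
    (hclass : NumberField.classNumber F = 1)
    -- conj : complex conjugation on K
    (conj : K ≃ₐ[F] K)
    (hσconj : ∀ x : K, σ (conj x) = starRingEnd ℂ (σ x))
    (N : ℕ) (hN : 0 < N) (dK : 𝓞 F)
    (a b c : 𝓞 F) (hQ : IsFormN F τ N dK a b c)
    (a' b' c' : 𝓞 F) (hQ' : IsFormN F τ N dK a' b' c')
    (ω : K) (hω : IsFormRoot F K σ a b c ω)
    (ω' : K) (hω' : IsFormRoot F K σ a' b' c' ω') :
    (∃ γ : Matrix (Fin 2) (Fin 2) (𝓞 F),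
        IsGammaN F τ N γ ∧ FormAct F γ a b c a' b' c')
    ↔ (∃ γ : Matrix (Fin 2) (Fin 2) (𝓞 F), IsGammaN F τ N γ ∧
        iota F K (γ 1 0) * (-(conj ω')) + iota F K (γ 1 1) ≠ 0 ∧
        -(conj ω) = (iota F K (γ 0 0) * (-(conj ω')) + iota F K (γ 0 1)) /
          (iota F K (γ 1 0) * (-(conj ω')) + iota F K (γ 1 1))) := by
  obtain ⟨hprim, hapos, hdiscQ, hNco⟩ := hQ
  obtain ⟨hprim', hapos', hdiscQ', hNco'⟩ := hQ'
  obtain ⟨hωeq, hωim⟩ := hω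
  obtain ⟨hω'eq, hω'im⟩ := hω'
  have central := fun (al be g d : 𝓞 F) =>
    central_aux F K τ σ hcompat conj hσconj dK a b c a' b' c' hapos hdiscQ hapos' hdiscQ'
      ω ω' hωeq hωim hω'eq hω'im al be g d
  have hcr := conjrel_aux F K σ conj hσconj ω ω'
  have hιneg : ∀ x : 𝓞 F, iota F K (-x) = -(iota F K x) :=
    fun x => map_neg ((algebraMap F K).comp (algebraMap (𝓞 F) F)) x
  constructor
  · rintro ⟨γ, hγ, hact⟩
    obtain ⟨hu, hpos, hd10, ζ, hd11⟩ := hγ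
    have hdet : (!![γ 0 0, -(γ 0 1); -(γ 1 0), γ 1 1]).det = γ.det := by
      rw [Matrix.det_fin_two_of, Matrix.det_fin_two]; ring
    have e00 : (!![γ 0 0, -(γ 0 1); -(γ 1 0), γ 1 1]) 0 0 = γ 0 0 := by simp
    have e01 : (!![γ 0 0, -(γ 0 1); -(γ 1 0), γ 1 1]) 0 1 = -(γ 0 1) := by simp
    have e10 : (!![γ 0 0, -(γ 0 1); -(γ 1 0), γ 1 1]) 1 0 = -(γ 1 0) := by simp
    have e11 : (!![γ 0 0, -(γ 0 1); -(γ 1 0), γ 1 1]) 1 1 = γ 1 1 := by simp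
    refine ⟨!![γ 0 0, -(γ 0 1); -(γ 1 0), γ 1 1],
      ⟨by rw [hdet]; exact hu, by rw [hdet]; exact hpos,
       by rw [e10]; exact dvd_neg.mpr hd10, ⟨ζ, by rw [e11]; exact hd11⟩⟩, ?_⟩
    rw [e00, e01, e10, e11]
    rw [hcr (γ 0 0) (-(γ 0 1)) (-(γ 1 0)) (γ 1 1)]
    rw [hιneg, hιneg]
    simp only [neg_neg, sub_neg_eq_add]
    refine (central (γ 0 0) (γ 0 1) (γ 1 0) (γ 1 1) ?_ ?_).mp ?_
    · rw [← Matrix.det_fin_two]; exact hu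
    · rw [← Matrix.det_fin_two]; exact hpos
    · obtain ⟨f1, f2, f3⟩ := hact
      rw [Matrix.det_fin_two] at f1 f2 f3
      exact ⟨f1, f2, f3⟩
  · rintro ⟨γ, hγ, hrel⟩
    obtain ⟨hu, hpos, hd10, ζ, hd11⟩ := hγ
    have hdet : (!![γ 0 0, -(γ 0 1); -(γ 1 0), γ 1 1]).det = γ.det := by
      rw [Matrix.det_fin_two_of, Matrix.det_fin_two]; ring
    have e00 : (!![γ 0 0, -(γ 0 1); -(γ 1 0), γ 1 1]) 0 0 = γ 0 0 := by simp
    have e01 : (!![γ 0 0, -(γ 0 1); -(γ 1 0), γ 1 1]) 0 1 = -(γ 0 1) := by simp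
    have e10 : (!![γ 0 0, -(γ 0 1); -(γ 1 0), γ 1 1]) 1 0 = -(γ 1 0) := by simp
    have e11 : (!![γ 0 0, -(γ 0 1); -(γ 1 0), γ 1 1]) 1 1 = γ 1 1 := by simp
    refine ⟨!![γ 0 0, -(γ 0 1); -(γ 1 0), γ 1 1],
      ⟨by rw [hdet]; exact hu, by rw [hdet]; exact hpos,
       by rw [e10]; exact dvd_neg.mpr hd10, ⟨ζ, by rw [e11]; exact hd11⟩⟩, ?_⟩
    have h2 := (hcr (γ 0 0) (γ 0 1) (γ 1 0) (γ 1 1)).mp hrel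
    have hu2 : IsUnit (γ 0 0 * γ 1 1 - -(γ 0 1) * -(γ 1 0)) := by
      rw [show γ 0 0 * γ 1 1 - -(γ 0 1) * -(γ 1 0) = γ.det from by
        rw [Matrix.det_fin_two]; ring]
      exact hu
    have hp2 : 0 < τ ((γ 0 0 * γ 1 1 - -(γ 0 1) * -(γ 1 0) : 𝓞 F):F) := by
      rw [show (γ 0 0 * γ 1 1 - -(γ 0 1) * -(γ 1 0) : 𝓞 F) = γ.det from by
        rw [Matrix.det_fin_two]; ring]
      exact hpos
    have hRHS : iota F K (-(γ 1 0)) * ω' + iota F K (γ 1 1) ≠ 0 ∧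
        ω = (iota F K (γ 0 0) * ω' + iota F K (-(γ 0 1)))
          / (iota F K (-(γ 1 0)) * ω' + iota F K (γ 1 1)) := by
      constructor
      · rw [hιneg]; exact h2.1
      · rw [hιneg, hιneg, ← sub_eq_add_neg]; exact h2.2
    obtain ⟨f1, f2, f3⟩ :=
      (central (γ 0 0) (-(γ 0 1)) (-(γ 1 0)) (γ 1 1) hu2 hp2).mpr hRHS
    refine ⟨?_, ?_, ?_⟩
    · rw [Matrix.det_fin_two_of, e00, e10]; exact f1
    · rw [Matrix.det_fin_two_of, e00, e01, e10, e11]; exact f2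
    · rw [Matrix.det_fin_two_of, e01, e11]; exact f3
end
end

section
/- Assume additionally that Q, Q' ∈ Q_F⁺(N, d_K), i.e., their leading coefficients are totally positive. Then [Q] = [Q'] in C_F(N, d_K) if and only if −conj(ω_Q) = γ(−conj(ω_{Q'})) for some γ ∈ Γ_{F,1}⁺(N), the subgroup of Γ_{F,1}(N) of matrices with totally positive determinant. -/
open NumberField Complex

noncomputable section

/-- Total positivity of an element of `O_F` (at all real embeddings of the
totally real field `F`). -/
def TotPos (F : Type) [Field F] [NumberField F] (x : 𝓞 F) : Prop :=
  ∀ τ' : F →+* ℝ, 0 < τ' (x : F)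

/-- Any real embedding of `F` extends to a complex embedding of `K`. -/
lemma ext_embed (F K : Type) [Field F] [Field K] [NumberField F] [NumberField K]
    [Algebra F K] (τ' : F →+* ℝ) :
    ∃ ψ : K →+* ℂ, ∀ x : F, ψ (algebraMap F K x) = (τ' x : ℂ) := by
  letI : Algebra F ℂ := (Complex.ofRealHom.comp τ').toAlgebra
  haveI : IsScalarTower ℚ F K := IsScalarTower.of_algebraMap_eq (fun q => by
    rw [eq_ratCast (algebraMap ℚ F), map_ratCast, eq_ratCast (algebraMap ℚ K)])
  haveI : Algebra.IsAlgebraic F K := Algebra.IsAlgebraic.tower_top (K := ℚ) F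
  refine ⟨(IsAlgClosed.lift (R := F) (S := K) (M := ℂ)).toRingHom, fun x => ?_⟩
  have h := (IsAlgClosed.lift (R := F) (S := K) (M := ℂ)).commutes x
  simp only [AlgHom.toRingHom_eq_coe, RingHom.coe_coe]
  rw [h, RingHom.algebraMap_toAlgebra]
  rfl

set_option maxHeartbeats 1600000 in
theorem stmt13 (F K : Type) [Field F] [Field K] [NumberField F] [NumberField K]
    [Algebra F K] (τ : F →+* ℝ) (σ : K →+* ℂ)
    (hcompat : ∀ x : F, σ (algebraMap F K x) = (τ x : ℂ))
    (hF_totallyReal : ∀ φ : F →+* ℂ, ∀ x : F, (φ x).im = 0)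
    (hquadratic : Module.finrank F K = 2)
    (hclass : NumberField.classNumber F = 1)
    (ωK : K) (hωKint : IsIntegral ℤ ωK) (hωKim : 0 < (σ ωK).im)
    (hgen : ∀ x : 𝓞 K, ∃ u v : 𝓞 F, (x : K) = iota F K u * ωK + iota F K v)
    (bK cK : 𝓞 F) (hmin : ωK ^ 2 + iota F K bK * ωK + iota F K cK = 0)
    (dK : 𝓞 F) (hdK : dK = bK ^ 2 - 4 * cK)
    -- the fixed CM-type (K, {φ_i}) with φ₁ = id_K (the fixed embedding σ)
    -- and φ_i(ω_K) ∈ ℍ for all i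
    (g : ℕ) (hg : 0 < g) (φs : Fin g → (K →+* ℂ))
    (hcover : ∀ ψ : K →+* ℂ, ∃ i, ψ = φs i ∨ ψ = (starRingEnd ℂ).comp (φs i))
    (hdist : ∀ i j, φs i ≠ (starRingEnd ℂ).comp (φs j))
    (hφ0 : φs ⟨0, hg⟩ = σ)
    (hωKtype : ∀ i, 0 < (φs i ωK).im)
    -- conj : complex conjugation on K
    (conj : K ≃ₐ[F] K)
    (hσconj : ∀ x : K, σ (conj x) = starRingEnd ℂ (σ x))
    (N : ℕ) (hN : 0 < N)
    (a b c : 𝓞 F) (hQ : IsFormN F τ N dK a b c) (haPos : TotPos F a)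
    (a' b' c' : 𝓞 F) (hQ' : IsFormN F τ N dK a' b' c') (haPos' : TotPos F a')
    (ω : K) (hω : IsFormRoot F K σ a b c ω)
    (ω' : K) (hω' : IsFormRoot F K σ a' b' c' ω') :
    (∃ γ : Matrix (Fin 2) (Fin 2) (𝓞 F),
        IsGammaN F τ N γ ∧ FormAct F γ a b c a' b' c')
    ↔ (∃ γ : Matrix (Fin 2) (Fin 2) (𝓞 F), IsGammaN F τ N γ ∧
        TotPos F γ.det ∧
        iota F K (γ 1 0) * (-(conj ω')) + iota F K (γ 1 1) ≠ 0 ∧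
        -(conj ω) = (iota F K (γ 0 0) * (-(conj ω')) + iota F K (γ 0 1)) /
          (iota F K (γ 1 0) * (-(conj ω')) + iota F K (γ 1 1))) := by
  -- the map O_F → K as a ring hom
  obtain ⟨ι, hιeq⟩ : ∃ ι : 𝓞 F →+* K, ∀ x : 𝓞 F, iota F K x = ι x :=
    ⟨(algebraMap F K).comp (algebraMap (𝓞 F) F), fun _ => rfl⟩
  have hσι : ∀ x : 𝓞 F, σ (ι x) = (τ (x:F) : ℂ) := fun x => by
    rw [← hιeq]; exact hcompat _
  have hι0 : ∀ x : 𝓞 F, ι x = 0 → x = 0 := by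
    intro x hx
    have h1 : algebraMap F K ((x : 𝓞 F) : F) = 0 := by rw [← hx, ← hιeq]; rfl
    have h2 : ((x : 𝓞 F) : F) = 0 := by
      apply (algebraMap F K).injective; simpa using h1
    exact_mod_cast h2
  have h4cast : ((4 : 𝓞 F) : F) = 4 := map_ofNat (algebraMap (𝓞 F) F) 4
  -- dK is totally negative
  have hdKneg : ∀ τ' : F →+* ℝ, τ' (dK:F) < 0 := by
    intro τ'
    obtain ⟨ψ, hψ⟩ := ext_embed F K τ'
    have him : (ψ ωK).im ≠ 0 := by
      obtain ⟨i, hi | hi⟩ := hcover ψ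
      · rw [hi]; exact ne_of_gt (hωKtype i)
      · rw [hi]
        simp only [RingHom.coe_comp, Function.comp_apply, Complex.conj_im]
        exact neg_ne_zero.mpr (ne_of_gt (hωKtype i))
    have heq : (ψ ωK)^2 + (τ' (bK:F) : ℂ) * ψ ωK + (τ' (cK:F) : ℂ) = 0 := by
      have := congrArg ψ hmin
      simpa [iota, map_add, map_mul, map_pow, hψ] using this
    set u := (ψ ωK).re
    set y := (ψ ωK).im
    have hre : u^2 - y^2 + τ' (bK:F) * u + τ' (cK:F) = 0 := by
      have := congrArg Complex.re heq
      simpa [pow_two, Complex.mul_re, Complex.mul_im, Complex.add_re] using this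
    have him2 : 2*u*y + τ' (bK:F) * y = 0 := by
      have := congrArg Complex.im heq
      simp only [pow_two, Complex.add_im, Complex.mul_im, Complex.mul_re,
        Complex.ofReal_re, Complex.ofReal_im, Complex.zero_im] at this
      linarith
    have hdKF : (dK : F) = (bK:F)^2 - 4*(cK:F) := by rw [hdK]; push_cast [h4cast]; ring
    have hτ'dK : τ' (dK:F) = τ' ((bK:F))^2 - 4 * τ' ((cK:F)) := by
      rw [hdKF, map_sub, map_mul, map_pow, map_ofNat]
    have hy : y ≠ 0 := him
    have hB : τ' (bK:F) = -2*u := by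
      have h3 : (2*u + τ' (bK:F)) * y = 0 := by linarith
      rcases mul_eq_zero.mp h3 with h | h
      · linarith
      · exact absurd h hy
    rw [hτ'dK]
    nlinarith [sq_pos_of_ne_zero hy]
  have hτdK : τ (dK:F) < 0 := hdKneg τ
  have hdK0 : dK ≠ 0 := by
    intro h; rw [h] at hτdK; simp at hτdK
  -- positive definiteness of forms with discriminant dK and totally positive lead
  have keypos : ∀ (τ' : F →+* ℝ) (A B C x y : 𝓞 F), B^2 - 4*A*C = dK →
      0 < τ' (A:F) → (x ≠ 0 ∨ y ≠ 0) →
      0 < τ' ((A*x^2 + B*x*y + C*y^2 : 𝓞 F) : F) := by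
    intro τ' A B C x y hdisc hA hxy
    have hd : τ' (B:F)^2 - 4 * τ' (A:F) * τ' (C:F) < 0 := by
      have hcast : ((B^2 - 4*A*C : 𝓞 F) : F) = (B:F)^2 - 4*(A:F)*(C:F) := by push_cast [h4cast]; ring
      have h2 := hdKneg τ'
      rw [← hdisc, hcast, map_sub, map_mul, map_mul, map_pow, map_ofNat] at h2
      linarith
    have hexp : τ' ((A*x^2 + B*x*y + C*y^2 : 𝓞 F) : F)
        = τ' (A:F) * τ' (x:F)^2 + τ' (B:F) * τ' (x:F) * τ' (y:F) + τ' (C:F) * τ' (y:F)^2 := by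
      have : ((A*x^2 + B*x*y + C*y^2 : 𝓞 F) : F) = (A:F)*(x:F)^2 + (B:F)*(x:F)*(y:F) + (C:F)*(y:F)^2 := by
        push_cast; ring
      rw [this]; simp [map_add, map_mul, map_pow]
    rw [hexp]
    rcases eq_or_ne y 0 with hy | hy
    · have hx : x ≠ 0 := by rcases hxy with h | h; exact h; exact absurd hy h
      have hxF : τ' (x:F) ≠ 0 := by simp [hx]
      have hyF : τ' (y:F) = 0 := by simp [hy]
      rw [hyF]
      have : 0 < τ' (x:F)^2 := by positivity
      nlinarith
    · have hyF : τ' (y:F) ≠ 0 := by simp [hy]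
      nlinarith [sq_nonneg (2 * τ' (A:F) * τ' (x:F) + τ' (B:F) * τ' (y:F)),
        sq_pos_of_ne_zero hyF]
  -- conj facts
  have hconjι : ∀ x : 𝓞 F, conj (ι x) = ι x := fun x => by
    rw [← hιeq]; exact conj.commutes (x : F)
  have hconj2 : ∀ x : K, conj (conj x) = x := by
    intro x
    apply σ.injective
    rw [hσconj, hσconj]
    simp
  have himconjω : (σ (conj ω)).im < 0 := by
    rw [hσconj]; simpa using hω.2
  have himconjω' : (σ (conj ω')).im < 0 := by
    rw [hσconj]; simpa using hω'.2
  -- elements of F are "real": linear relation lemma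
  have L5 : ∀ (u v : 𝓞 F) (z : K), (σ z).im ≠ 0 → ι u * z + ι v = 0 → u = 0 ∧ v = 0 := by
    intro u v z hz h
    have h2 := congrArg σ h
    rw [map_add, map_mul, hσι, hσι, map_zero] at h2
    have him := congrArg Complex.im h2
    simp only [Complex.add_im, Complex.mul_im, Complex.ofReal_re, Complex.ofReal_im,
      Complex.zero_im] at him
    have hu : τ (u:F) = 0 := by
      rcases mul_eq_zero.mp (by linarith : τ (u:F) * (σ z).im = 0) with h' | h'
      · exact h'
      · exact absurd h' hz
    have hu0 : u = 0 := by
      have h5 : ((u : 𝓞 F):F) = 0 := by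
        apply τ.injective; simpa using hu
      exact_mod_cast h5
    refine ⟨hu0, ?_⟩
    rw [hu0, map_zero, zero_mul, zero_add] at h
    exact hι0 v h
  have hτa : 0 < τ (a:F) := hQ.2.1
  have hτa' : 0 < τ (a':F) := hQ'.2.1
  have hιa0 : ι a ≠ 0 := fun h => by
    have := hι0 a h; rw [this] at hτa; simp at hτa
  have ha'0 : a' ≠ 0 := fun h => by rw [h] at hτa'; simp at hτa'
  constructor
  · -- forward direction
    rintro ⟨γ, ⟨hunit, hτdet, hNr, ζ, hNζ⟩, hFA1, hFA2, hFA3⟩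
    set p := γ 0 0 with hp
    set q := γ 0 1 with hq
    set r := γ 1 0 with hr
    set s := γ 1 1 with hs
    have hdet : γ.det = p*s - q*r := Matrix.det_fin_two γ
    have hpr : p ≠ 0 ∨ r ≠ 0 := by
      by_contra h
      push_neg at h
      rw [hdet, h.1, h.2] at hτdet
      simp at hτdet
    set G := ι p * ω' + ι q with hG
    set D := ι r * ω' + ι s with hD
    have E3 := hω'.1
    rw [hιeq, hιeq, hιeq] at E3
    -- image of the FormAct relations in K
    have M1 := congrArg ι hFA1
    have M2 := congrArg ι hFA2
    have M3 := congrArg ι hFA3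
    simp only [map_mul, map_add, map_pow, map_ofNat, hdet, map_sub] at M1 M2 M3
    have hroot : ι a * G^2 + ι b * G * D + ι c * D^2 = 0 := by
      rw [hG, hD]
      linear_combination (-(ω'^2)) * M1 + (-ω') * M2 + (-1) * M3 +
        (ι p * ι s - ι q * ι r) * E3
    have hD0 : D ≠ 0 := by
      intro h
      have hG0 : G = 0 := by
        have : ι a * G^2 = 0 := by rw [h] at hroot; linear_combination hroot
        rcases mul_eq_zero.mp this with h' | h'
        · exact absurd h' hιa0
        · exact pow_eq_zero_iff two_ne_zero |>.mp h'
      obtain ⟨hr0, hs0⟩ := L5 r s ω' (ne_of_gt hω'.2) h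
      rw [hdet, hr0, hs0] at hτdet
      simp at hτdet
    set z := G / D with hz
    have hDiv : z * D = G := div_mul_cancel₀ _ hD0
    have hzroot : ι a * z^2 + ι b * z + ι c = 0 := by
      have hid : (ι a * z^2 + ι b * z + ι c) * D^2
          = ι a * G^2 + ι b * G * D + ι c * D^2 := by
        linear_combination (ι a * (z*D + G) + ι b * D) * hDiv
      have h6 : (ι a * z^2 + ι b * z + ι c) * D^2 = 0 := by rw [hid]; exact hroot
      rcases mul_eq_zero.mp h6 with h' | h'
      · exact h'
      · exact absurd (pow_eq_zero_iff two_ne_zero |>.mp h') hD0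
    have e1 := hω.1
    rw [hιeq, hιeq, hιeq] at e1
    have e2 : ι a * (conj ω)^2 + ι b * (conj ω) + ι c = 0 := by
      have := congrArg conj e1
      simpa [map_add, map_mul, map_pow, hconjι] using this
    -- z is a root, so z = ω or z = conj ω
    have hzc : z = ω ∨ z = conj ω := by
      by_contra h
      push_neg at h
      have f1 : (z - ω) * (ι a * (z + ω) + ι b) = 0 := by linear_combination hzroot - e1
      have f2 : (z - conj ω) * (ι a * (z + conj ω) + ι b) = 0 := by
        linear_combination hzroot - e2
      have g1 : ι a * (z + ω) + ι b = 0 :=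
        (mul_eq_zero.mp f1).resolve_left (sub_ne_zero.mpr h.1)
      have g2 : ι a * (z + conj ω) + ι b = 0 :=
        (mul_eq_zero.mp f2).resolve_left (sub_ne_zero.mpr h.2)
      have : ι a * (ω - conj ω) = 0 := by linear_combination g1 - g2
      rcases mul_eq_zero.mp this with h' | h'
      · exact absurd h' hιa0
      · have hωeq : ω = conj ω := sub_eq_zero.mp h'
        have h5 : (σ ω).im = (σ (conj ω)).im := by rw [← hωeq]
        linarith [hω.2, himconjω]
    -- compute the imaginary part of σ z
    have hσD : σ D ≠ 0 := fun h => hD0 (by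
      have : σ D = σ 0 := by simpa using h
      exact σ.injective this)
    have himz : 0 < (σ z).im := by
      have hnsq : 0 < Complex.normSq (σ D) := Complex.normSq_pos.mpr hσD
      have hσG : σ G = (τ (p:F) : ℂ) * σ ω' + (τ (q:F) : ℂ) := by
        rw [hG, map_add, map_mul, hσι, hσι]
      have hσD' : σ D = (τ (r:F) : ℂ) * σ ω' + (τ (s:F) : ℂ) := by
        rw [hD, map_add, map_mul, hσι, hσι]
      have hτd : τ (γ.det : F) = τ (p:F) * τ (s:F) - τ (q:F) * τ (r:F) := by
        have hc : ((γ.det : 𝓞 F) : F) = (p:F)*(s:F) - (q:F)*(r:F) := by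
          rw [hdet]; push_cast; ring
        rw [hc, map_sub, map_mul, map_mul]
      have hcalc : (σ z).im = τ (γ.det:F) * (σ ω').im / Complex.normSq (σ D) := by
        rw [hz, map_div₀, Complex.div_im, hσG, hσD', hτd]
        simp only [Complex.add_re, Complex.add_im, Complex.mul_re, Complex.mul_im,
          Complex.ofReal_re, Complex.ofReal_im]
        ring
      rw [hcalc]
      exact div_pos (mul_pos hτdet hω'.2) hnsq
    have hzω : z = ω := by
      rcases hzc with h | h
      · exact h
      · rw [h] at himz; linarith
    -- the matrix δ
    refine ⟨!![p, -q; -r, s], ⟨?_, ?_, ?_, ⟨ζ, ?_⟩⟩, ?_, ?_, ?_⟩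
    · have : (!![p, -q; -r, s]).det = γ.det := by
        rw [Matrix.det_fin_two_of, hdet]; ring
      rw [this]; exact hunit
    · have : (!![p, -q; -r, s]).det = γ.det := by
        rw [Matrix.det_fin_two_of, hdet]; ring
      rw [this]; exact hτdet
    · show (N : 𝓞 F) ∣ -r
      exact dvd_neg.mpr hNr
    · show (N : 𝓞 F) ∣ s - (ζ : 𝓞 F)
      exact hNζ
    · -- total positivity of the determinant
      intro τ'
      have hdd : (!![p, -q; -r, s]).det = γ.det := by
        rw [Matrix.det_fin_two_of, hdet]; ring
      rw [hdd]
      have hval : γ.det * a' = a*p^2 + b*p*r + c*r^2 := hFA1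
      have hA : 0 < τ' ((a*p^2 + b*p*r + c*r^2 : 𝓞 F) : F) := by
        have : (a*p^2 + b*p*r + c*r^2 : 𝓞 F) = a*p^2 + b*p*r + c*r^2 := rfl
        exact keypos τ' a b c p r hQ.2.2.1 (haPos τ') hpr
      rw [← hval] at hA
      have hprod : τ' ((γ.det * a' : 𝓞 F) : F) = τ' (γ.det : F) * τ' (a':F) := by
        push_cast
        simp [map_mul]
      rw [hprod] at hA
      have := haPos' τ'
      nlinarith
    · -- denominator nonzero
      have h10 : (!![p, -q; -r, s] : Matrix (Fin 2) (Fin 2) (𝓞 F)) 1 0 = -r := rfl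
      have h11 : (!![p, -q; -r, s] : Matrix (Fin 2) (Fin 2) (𝓞 F)) 1 1 = s := rfl
      rw [h10, h11, hιeq, hιeq]
      have hconjD : conj D = ι r * conj ω' + ι s := by
        rw [hD, map_add, map_mul, hconjι, hconjι]
      have heqc : ι (-r) * (-(conj ω')) + ι s = ι r * conj ω' + ι s := by
        rw [map_neg]; ring
      rw [heqc, ← hconjD]
      intro h
      exact hD0 (by
        have := congrArg conj h
        rw [hconj2, map_zero] at this
        exact this)
    · -- the Möbius relation
      have h00 : (!![p, -q; -r, s] : Matrix (Fin 2) (Fin 2) (𝓞 F)) 0 0 = p := rfl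
      have h01 : (!![p, -q; -r, s] : Matrix (Fin 2) (Fin 2) (𝓞 F)) 0 1 = -q := rfl
      have h10 : (!![p, -q; -r, s] : Matrix (Fin 2) (Fin 2) (𝓞 F)) 1 0 = -r := rfl
      have h11 : (!![p, -q; -r, s] : Matrix (Fin 2) (Fin 2) (𝓞 F)) 1 1 = s := rfl
      rw [h00, h01, h10, h11, hιeq, hιeq, hιeq, hιeq]
      have hconjD : conj D = ι r * conj ω' + ι s := by
        rw [hD, map_add, map_mul, hconjι, hconjι]
      have heqc : ι (-r) * (-(conj ω')) + ι s = ι r * conj ω' + ι s := by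
        rw [map_neg]; ring
      have hcD0 : conj D ≠ 0 := fun h => hD0 (by
        have := congrArg conj h
        rw [hconj2, map_zero] at this
        exact this)
      have hcD0' : ι r * conj ω' + ι s ≠ 0 := by rw [← hconjD]; exact hcD0
      rw [heqc, eq_div_iff hcD0']
      have hGD : G = ω * D := by
        rw [← hzω, hz, div_mul_cancel₀ _ hD0]
      have hconjGD := congrArg conj hGD
      rw [hG, hD, map_add, map_mul, map_mul, map_add, map_mul, hconjι, hconjι,
        hconjι, hconjι] at hconjGD
      rw [map_neg]
      linear_combination hconjGD
  · -- backward direction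
    rintro ⟨γ, ⟨hunit, hτdet, hNr, ζ, hNζ⟩, htp, hDen, hMob⟩
    set p := γ 0 0 with hp
    set q := γ 0 1 with hq
    set r := γ 1 0 with hr
    set s := γ 1 1 with hs
    have hdet : γ.det = p*s - q*r := Matrix.det_fin_two γ
    simp only [hιeq] at hMob hDen
    have hMob' : (-(conj ω)) * (ι r * (-(conj ω')) + ι s) = ι p * (-(conj ω')) + ι q := by
      rw [hMob, div_mul_cancel₀ _ hDen]
    -- apply conj
    have E1 : (-ω) * (ι r * (-ω') + ι s) = ι p * (-ω') + ι q := by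
      have := congrArg conj hMob'
      simpa [map_mul, map_add, map_neg, hconjι, hconj2] using this
    have hu0 : ι s - ι r * ω' ≠ 0 := by
      intro h
      apply hDen
      have := congrArg conj h
      rw [map_sub, map_mul, hconjι, hconjι, map_zero] at this
      linear_combination this
    have e1 := hω.1
    rw [hιeq, hιeq, hιeq] at e1
    have E3 := hω'.1
    rw [hιeq, hιeq, hιeq] at E3
    -- the transformed coefficients
    set A : 𝓞 F := a*p^2 - b*p*r + c*r^2 with hA
    set B : 𝓞 F := -(2*a*p*q) + b*(p*s + q*r) - 2*c*r*s with hB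
    set C : 𝓞 F := a*q^2 - b*q*s + c*s^2 with hC
    have hωval : ω = (ι p * ω' - ι q) / (ι s - ι r * ω') := by
      rw [eq_div_iff hu0]
      linear_combination -E1
    have hABC : ι A * ω'^2 + ι B * ω' + ι C = 0 := by
      have e1' : ι a * ((ι p * ω' - ι q) / (ι s - ι r * ω'))^2
          + ι b * ((ι p * ω' - ι q) / (ι s - ι r * ω')) + ι c = 0 := by
        rw [← hωval]; exact e1
      rw [div_pow] at e1'
      have e1'' : ι a * (ι p * ω' - ι q)^2 + ι b * (ι p * ω' - ι q) * (ι s - ι r * ω')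
          + ι c * (ι s - ι r * ω')^2 = 0 := by
        have h7 : (ι a * (ι p * ω' - ι q)^2 + ι b * (ι p * ω' - ι q) * (ι s - ι r * ω')
            + ι c * (ι s - ι r * ω')^2) * (ι s - ι r * ω') = 0 := by
          have hinv : (ι s - ι r * ω') * (ι s - ι r * ω')⁻¹ = 1 := mul_inv_cancel₀ hu0
          rw [div_eq_mul_inv, div_eq_mul_inv, ← inv_pow] at e1'
          linear_combination (ι s - ι r * ω')^3 * e1' - (ι a * (ι p * ω' - ι q)^2 * (ι s - ι r * ω')
            * ((ι s - ι r * ω') * (ι s - ι r * ω')⁻¹ + 1)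
            + ι b * (ι p * ω' - ι q) * (ι s - ι r * ω')^2) * hinv
        rcases mul_eq_zero.mp h7 with h' | h'
        · exact h'
        · exact absurd h' hu0
      rw [hA, hB, hC]
      simp only [map_add, map_mul, map_sub, map_neg, map_pow, map_ofNat]
      linear_combination e1''
    -- proportionality
    have hprop : ι (A*b' - a'*B) * ω' + ι (A*c' - a'*C) = 0 := by
      simp only [map_sub, map_mul]
      linear_combination ι A * E3 - ι a' * hABC
    obtain ⟨h1, h2⟩ := L5 (A*b' - a'*B) (A*c' - a'*C) ω' (ne_of_gt hω'.2) hprop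
    have hAb : A*b' = a'*B := sub_eq_zero.mp h1
    have hAc : A*c' = a'*C := sub_eq_zero.mp h2
    -- discriminant identity
    have hdisc : B^2 - 4*A*C = γ.det^2 * dK := by
      rw [hA, hB, hC, hdet, ← hQ.2.2.1]
      ring
    have hdisc' : b'^2 - 4*a'*c' = dK := hQ'.2.2.1
    -- A^2 = (a' det)^2
    have hkey : (A^2 - (a'*γ.det)^2) * dK = 0 := by
      have : A^2 * dK = (a'*γ.det)^2 * dK := by
        calc A^2 * dK = A^2 * (b'^2 - 4*a'*c') := by rw [hdisc']
        _ = (A*b')^2 - 4*(A*c')*(A*a') := by ring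
        _ = (a'*B)^2 - 4*(a'*C)*(A*a') := by rw [hAb, hAc]
        _ = a'^2 * (B^2 - 4*A*C) := by ring
        _ = a'^2 * (γ.det^2 * dK) := by rw [hdisc]
        _ = (a'*γ.det)^2 * dK := by ring
      linear_combination this
    have hsq : A^2 = (a'*γ.det)^2 := by
      rcases mul_eq_zero.mp hkey with h | h
      · linear_combination h
      · exact absurd h hdK0
    have hfac : (A - a'*γ.det) * (A + a'*γ.det) = 0 := by linear_combination hsq
    -- sign determination at τ
    have hpr : p ≠ 0 ∨ (-r) ≠ 0 := by
      by_contra h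
      push_neg at h
      have hr0 : r = 0 := by simpa using h.2
      rw [hdet, h.1, hr0] at hτdet
      simp at hτdet
    have hApos : 0 < τ (A:F) := by
      have : A = a*p^2 + b*p*(-r) + c*(-r)^2 := by rw [hA]; ring
      rw [this]
      exact keypos τ a b c p (-r) hQ.2.2.1 hτa hpr
    have hAval : A = a' * γ.det := by
      rcases mul_eq_zero.mp hfac with h | h
      · linear_combination h
      · exfalso
        have : A = -(a' * γ.det) := by linear_combination h
        rw [this] at hApos
        have : ((-(a' * γ.det) : 𝓞 F) : F) = -((a':F) * (γ.det:F)) := by push_cast; ring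
        rw [this] at hApos
        rw [map_neg, map_mul] at hApos
        nlinarith
    have hBval : B = γ.det * b' := by
      have : a' * (B - γ.det * b') = 0 := by
        rw [hAval] at hAb
        linear_combination -hAb
      rcases mul_eq_zero.mp this with h | h
      · exact absurd h ha'0
      · linear_combination h
    have hCval : C = γ.det * c' := by
      have : a' * (C - γ.det * c') = 0 := by
        rw [hAval] at hAc
        linear_combination -hAc
      rcases mul_eq_zero.mp this with h | h
      · exact absurd h ha'0
      · linear_combination h
    refine ⟨!![p, -q; -r, s], ⟨?_, ?_, ?_, ⟨ζ, ?_⟩⟩, ?_, ?_, ?_⟩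
    · have : (!![p, -q; -r, s]).det = γ.det := by
        rw [Matrix.det_fin_two_of, hdet]; ring
      rw [this]; exact hunit
    · have : (!![p, -q; -r, s]).det = γ.det := by
        rw [Matrix.det_fin_two_of, hdet]; ring
      rw [this]; exact hτdet
    · show (N : 𝓞 F) ∣ -r
      exact dvd_neg.mpr hNr
    · show (N : 𝓞 F) ∣ s - (ζ : 𝓞 F)
      exact hNζ
    · show (!![p, -q; -r, s]).det * a' = a * p^2 + b * p * (-r) + c * (-r)^2
      rw [Matrix.det_fin_two_of]
      have : A = a' * γ.det := hAval
      rw [hdet] at this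
      rw [hA] at this
      linear_combination -this
    · show (!![p, -q; -r, s]).det * b'
        = 2*a*p*(-q) + b*(p*s + (-q)*(-r)) + 2*c*(-r)*s
      rw [Matrix.det_fin_two_of]
      have : B = γ.det * b' := hBval
      rw [hdet] at this
      rw [hB] at this
      linear_combination -this
    · show (!![p, -q; -r, s]).det * c' = a*(-q)^2 + b*(-q)*s + c*s^2
      rw [Matrix.det_fin_two_of]
      have : C = γ.det * c' := hCval
      rw [hdet] at this
      rw [hC] at this
      linear_combination -this
end
end

section
/- If the narrow class number of F is one, then every class in C_F(N, d_K) contains a representative Q ∈ Q_F⁺(N, d_K), i.e., a form whose leading coefficient is totally positive. -/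
open NumberField Complex

noncomputable section

theorem stmt14 (F K : Type) [Field F] [Field K] [NumberField F] [NumberField K]
    [Algebra F K] (τ : F →+* ℝ) (σ : K →+* ℂ)
    (hcompat : ∀ x : F, σ (algebraMap F K x) = (τ x : ℂ))
    (hF_totallyReal : ∀ φ : F →+* ℂ, ∀ x : F, (φ x).im = 0)
    (hquadratic : Module.finrank F K = 2)
    -- narrow class number of F is one
    (hnarrow : ∀ I : Ideal (𝓞 F), I ≠ ⊥ →
      ∃ x : 𝓞 F, TotPos F x ∧ I = Ideal.span {x})
    (N : ℕ) (hN : 0 < N) (dK : 𝓞 F)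
    (a b c : 𝓞 F) (hQ : IsFormN F τ N dK a b c) :
    ∃ a' b' c' : 𝓞 F, IsFormN F τ N dK a' b' c' ∧ TotPos F a' ∧
      ∃ γ : Matrix (Fin 2) (Fin 2) (𝓞 F),
        IsGammaN F τ N γ ∧ FormAct F γ a b c a' b' c' := by

  obtain ⟨hprim, hτa, hdisc, hcop⟩ := hQ
  have ha0 : a ≠ 0 := by
    rintro rfl
    simp at hτa
  obtain ⟨x, hxpos, hxspan⟩ := hnarrow (Ideal.span {a})
    (by simp [Ideal.span_singleton_eq_bot, ha0])
  have hassoc : Associated a x := Ideal.span_singleton_eq_span_singleton.mp hxspan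
  obtain ⟨u, hu⟩ := hassoc
  set ε : 𝓞 F := ((u⁻¹ : (𝓞 F)ˣ) : 𝓞 F) with hε
  have hax : ε * x = a := by
    rw [← hu, hε]
    calc ((u⁻¹ : (𝓞 F)ˣ) : 𝓞 F) * (a * u) = a * ((u : 𝓞 F) * ((u⁻¹ : (𝓞 F)ˣ) : 𝓞 F)) := by ring
    _ = a := by rw [Units.mul_inv, mul_one]
  have hεunit : IsUnit ε := (u⁻¹).isUnit
  have hτx : 0 < τ (x : F) := hxpos τ
  have hkey : τ (ε : F) * τ (x : F) = τ (a : F) := by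
    rw [← map_mul, ← hax]
    push_cast
    ring_nf
  have hτε : 0 < τ (ε : F) := by nlinarith [hkey, hτx, hτa]
  have hadvd : ∀ d : 𝓞 F, d ∣ x → d ∣ a := fun d hd => hax ▸ hd.mul_left ε
  refine ⟨x, b, c * ε, ⟨?_, hτx, ?_, ?_⟩, hxpos, !![1, 0; 0, ε], ⟨?_, ?_, ?_, ?_⟩, ?_, ?_, ?_⟩
  · intro d hdx hdb hdc
    exact hprim d (hadvd d hdx) hdb (hεunit.dvd_mul_right.mp hdc)
  · rw [← hdisc, ← hax]; ring
  · intro d hdx hdN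
    exact hcop d (hadvd d hdx) hdN
  · simp [Matrix.det_fin_two_of, hεunit]
  · simpa [Matrix.det_fin_two_of] using hτε
  · simp
  · exact ⟨u⁻¹, by simp [hε]⟩
  · simp [Matrix.det_fin_two_of, hax]
  · simp [Matrix.det_fin_two_of]; ring
  · simp [Matrix.det_fin_two_of]; ring
end
end

section
/- Let C ∈ C(N·O_K) and let 𝔠 be an integral ideal in C. Then there exist ξ₁, ξ₂ ∈ K such that 𝔠⁻¹ = O_F·ξ₁ + O_F·ξ₂ and φ_i(ξ₁/ξ₂) lies in the upper half-plane ℍ for every i = 1, …, g. -/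
open NumberField Complex

noncomputable section

def realEmbed {F : Type} [Field F] (ψ : F →+* ℂ) (h : ∀ x, (ψ x).im = 0) :
    F →+* ℝ where
  toFun x := (ψ x).re
  map_one' := by simp
  map_mul' x y := by simp [Complex.mul_re, h]
  map_zero' := by simp
  map_add' x y := by simp [Complex.add_re]

lemma realEmbed_spec {F : Type} [Field F] (ψ : F →+* ℂ) (h : ∀ x, (ψ x).im = 0) (x : F) :
    ψ x = ((realEmbed ψ h) x : ℂ) := by
  apply Complex.ext <;> simp [realEmbed, h]

lemma exists_unit_sign (F : Type) [Field F] [NumberField F]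
    (hnarrow : ∀ I : Ideal (𝓞 F), I ≠ ⊥ → ∃ x : 𝓞 F, TotPos F x ∧ I = Ideal.span {x})
    (a : F) (ha : a ≠ 0) :
    ∃ t : (𝓞 F)ˣ, ∀ τ' : F →+* ℝ, 0 < τ' a * τ' ((t : 𝓞 F) : F) := by
  obtain ⟨p, q, hq, hpq⟩ := IsFractionRing.div_surjective (A := 𝓞 F) a
  have hq0 : q ≠ 0 := nonZeroDivisors.ne_zero hq
  have hp0 : p ≠ 0 := by
    rintro rfl; apply ha; rw [← hpq]; simp
  obtain ⟨x, hx, hsp⟩ := hnarrow (Ideal.span {p * q})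
    (by simpa [Ideal.span_singleton_eq_bot] using mul_ne_zero hp0 hq0)
  obtain ⟨t, ht⟩ := Ideal.span_singleton_eq_span_singleton.mp hsp
  refine ⟨t, fun τ' => ?_⟩
  have hx' : 0 < τ' (x : F) := hx τ'
  have hxe : (x : F) = (p : F) * (q : F) * ((t : 𝓞 F) : F) := by
    rw [← ht]; push_cast; ring
  have hqF : (q : F) ≠ 0 := by
    exact_mod_cast hq0
  have hτq : τ' (q : F) ≠ 0 := fun h => hqF (by
    exact (map_eq_zero_iff τ' τ'.injective).mp h)
  have hτa : τ' a = τ' (p : F) / τ' (q : F) := by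
    rw [← hpq, map_div₀]
  rw [hxe] at hx'
  simp only [map_mul] at hx'
  rw [hτa]
  have : τ' (p : F) / τ' (q : F) * τ' ((t : 𝓞 F) : F)
      = (τ' (p : F) * τ' (q : F) * τ' ((t : 𝓞 F) : F)) / (τ' (q : F)) ^ 2 := by
    field_simp
  rw [this]
  exact div_pos hx' (pow_two_pos_of_ne_zero hτq)

theorem stmt15 (F K : Type) [Field F] [Field K] [NumberField F] [NumberField K]
    [Algebra F K] (τ : F →+* ℝ) (σ : K →+* ℂ)
    (hcompat : ∀ x : F, σ (algebraMap F K x) = (τ x : ℂ))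
    (hF_totallyReal : ∀ φ : F →+* ℂ, ∀ x : F, (φ x).im = 0)
    (hquadratic : Module.finrank F K = 2)
    -- narrow class number of F is one
    (hnarrow : ∀ I : Ideal (𝓞 F), I ≠ ⊥ →
      ∃ x : 𝓞 F, TotPos F x ∧ I = Ideal.span {x})
    (ωK : K) (hωKint : IsIntegral ℤ ωK) (hωKim : 0 < (σ ωK).im)
    (hgen : ∀ x : 𝓞 K, ∃ u v : 𝓞 F, (x : K) = iota F K u * ωK + iota F K v)
    -- the fixed CM-type
    (g : ℕ) (hg : 0 < g) (φs : Fin g → (K →+* ℂ))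
    (hcover : ∀ ψ : K →+* ℂ, ∃ i, ψ = φs i ∨ ψ = (starRingEnd ℂ).comp (φs i))
    (hdist : ∀ i j, φs i ≠ (starRingEnd ℂ).comp (φs j))
    (hφ0 : φs ⟨0, hg⟩ = σ)
    (hωKtype : ∀ i, 0 < (φs i ωK).im)
    (N : ℕ) (hN : 0 < N)
    -- 𝔠 : an integral ideal relatively prime to N·O_K
    (c : Ideal (𝓞 K)) (hc : c ≠ ⊥)
    (hcop : IsCoprime c (Ideal.span {(N : 𝓞 K)})) :
    ∃ ξ₁ ξ₂ : K, ξ₂ ≠ 0 ∧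
      (∀ x : K,
        x ∈ (((c : FractionalIdeal (nonZeroDivisors (𝓞 K)) K))⁻¹ :
            FractionalIdeal (nonZeroDivisors (𝓞 K)) K).coeToSubmodule ↔
          ∃ u v : 𝓞 F, x = iota F K u * ξ₁ + iota F K v * ξ₂) ∧
      ∀ i, 0 < (φs i (ξ₁ / ξ₂)).im := by
  classical
  haveI : FiniteDimensional F K :=
    Module.finite_of_finrank_pos (by rw [hquadratic]; norm_num)
  set I : FractionalIdeal (nonZeroDivisors (𝓞 K)) K :=
    ((c : FractionalIdeal (nonZeroDivisors (𝓞 K)) K))⁻¹ with hIdef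
  set M : Submodule (𝓞 K) K := I.coeToSubmodule with hMdef
  have hc0 : (c : FractionalIdeal (nonZeroDivisors (𝓞 K)) K) ≠ 0 :=
    FractionalIdeal.coeIdeal_ne_zero.mpr hc
  have hI0 : I ≠ 0 := inv_ne_zero hc0
  have hM0 : M ≠ ⊥ := by
    simpa [hMdef, FractionalIdeal.coeToSubmodule_eq_bot] using hI0
  have hMfg : M.FG := FractionalIdeal.fg_of_isNoetherianRing le_rfl I
  set N' : Submodule (𝓞 F) K := M.restrictScalars (𝓞 F) with hNdef
  haveI : Module.Finite (𝓞 K) M := Module.Finite.iff_fg.mpr hMfg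
  haveI : Module.Finite (𝓞 F) (𝓞 K) :=
    Module.Finite.of_restrictScalars_finite ℤ (𝓞 F) (𝓞 K)
  haveI : Module.Finite (𝓞 K) N' :=
    Module.Finite.equiv (Submodule.restrictScalarsEquiv (𝓞 F) (𝓞 K) K M).symm
  haveI : Module.Finite (𝓞 F) N' := Module.Finite.trans (𝓞 K) N'
  haveI : IsPrincipalIdealRing (𝓞 F) := ⟨fun I' => by
    by_cases h : I' = ⊥
    · exact ⟨⟨0, by rw [h, Submodule.span_zero_singleton]⟩⟩
    · obtain ⟨x, -, hx⟩ := hnarrow I' h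
      exact ⟨⟨x, hx⟩⟩⟩
  have halgFK : Function.Injective (algebraMap (𝓞 F) K) := by
    rw [IsScalarTower.algebraMap_eq (𝓞 F) F K]
    exact (algebraMap F K).injective.comp (IsFractionRing.injective (𝓞 F) F)
  haveI : Module.IsTorsionFree (𝓞 F) K :=
    Module.isTorsionFree_iff_algebraMap_injective.mpr halgFK
  haveI : Module.IsTorsionFree (𝓞 F) N' := inferInstance
  haveI : Module.Free (𝓞 F) N' := Module.free_of_finite_type_torsion_free'
  -- choose an O_F-basis of N'
  set ι := Module.Free.ChooseBasisIndex (𝓞 F) N' with hι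
  set b : Module.Basis ι (𝓞 F) N' := Module.Free.chooseBasis (𝓞 F) N' with hbdef
  set v : ι → K := fun i => ((b i : N') : K) with hvdef
  have hvi : LinearIndependent (𝓞 F) v :=
    b.linearIndependent.map' N'.subtype (Submodule.ker_subtype N')
  have hvF : LinearIndependent F v :=
    (LinearIndependent.iff_fractionRing (𝓞 F) F).mp hvi
  have hNspan : N' = Submodule.span (𝓞 F) (Set.range v) := by
    have h2 := congrArg (Submodule.map N'.subtype) b.span_eq
    rw [Submodule.map_span, Submodule.map_subtype_top] at h2
    rw [← h2]
    congr 1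
    rw [← Set.range_comp]
    rfl
  have hNsub : ∀ y ∈ N', y ∈ Submodule.span F (Set.range v) := by
    intro y hy
    have h3 : y ∈ Submodule.span (𝓞 F) (Set.range v) := by rw [← hNspan]; exact hy
    exact Submodule.span_le_restrictScalars (𝓞 F) F (Set.range v) h3
  have hspanF : Submodule.span F (Set.range v) = ⊤ := by
    rw [eq_top_iff]
    rintro x -
    obtain ⟨m, hmN, hm0⟩ := Submodule.exists_mem_ne_zero_of_ne_bot hM0
    have halg : IsAlgebraic ℤ (x / m) :=
      (IsFractionRing.isAlgebraic_iff ℤ ℚ K).mpr (Algebra.IsAlgebraic.isAlgebraic _)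
    obtain ⟨w, n, hn0, hwk⟩ : ∃ w : integralClosure ℤ K, ∃ n : ℤ, n ≠ 0 ∧
        x / m * ((n : ℤ) : K) = w := by
      obtain ⟨n, hn0, hint⟩ := halg.exists_integral_multiple
      refine ⟨⟨n • (x / m), hint⟩, n, hn0, ?_⟩
      simp [zsmul_eq_mul, mul_comm]
    obtain ⟨w', hw'⟩ := IsIntegralClosure.isIntegral_iff (A := 𝓞 K) (R := ℤ) (B := K)
      |>.mp (w.2 : IsIntegral ℤ (w : K))
    have hnK : ((n : ℤ) : K) ≠ 0 := by exact_mod_cast hn0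
    have hwm : (algebraMap (𝓞 K) K w') * m = ((n : ℤ) : K) * x := by
      rw [hw']
      rw [← hwk]
      push_cast
      field_simp
    have hx2 : x = ((n : ℤ) : F)⁻¹ • ((w' • m : K)) := by
      rw [Algebra.smul_def, Algebra.smul_def, hwm, map_inv₀, map_intCast]
      rw [inv_mul_cancel_left₀ hnK]
    rw [hx2]
    exact Submodule.smul_mem _ _ (hNsub _ (M.smul_mem w' hmN))
  -- hence v is an F-basis of K, so ι has two elements
  set bK : Module.Basis ι F K := Module.Basis.mk hvF hspanF.ge with hbK
  have hcard : Fintype.card ι = 2 := by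
    have h4 := Module.finrank_eq_card_basis bK
    rw [hquadratic] at h4
    exact h4.symm
  set e : ι ≃ Fin 2 := Fintype.equivFinOfCardEq hcard with he
  set w0 : K := v (e.symm 0) with hw0def
  set w1 : K := v (e.symm 1) with hw1def
  have hrange : Set.range v = {w0, w1} := by
    rw [← Function.Surjective.range_comp e.symm.surjective v]
    ext z
    simp only [Set.mem_range, Set.mem_insert_iff, Set.mem_singleton_iff]
    rw [Fin.exists_fin_two]
    exact ⟨fun h => h.imp Eq.symm Eq.symm, fun h => h.imp Eq.symm Eq.symm⟩
  have hNspan2 : N' = Submodule.span (𝓞 F) {w0, w1} := by rw [hNspan, hrange]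
  have hpair : LinearIndependent F ![w0, w1] := by
    have h5 : LinearIndependent F (v ∘ e.symm) := hvF.comp e.symm e.symm.injective
    have h6 : ![w0, w1] = v ∘ e.symm := by
      funext j
      fin_cases j <;> rfl
    rw [h6]
    exact h5
  have hw1 : w1 ≠ 0 := hvF.ne_zero (e.symm 1)
  -- ωK generates K over F
  have hω_not : ∀ r : F, ωK ≠ algebraMap F K r := by
    intro r hr
    have h6 := hωKtype ⟨0, hg⟩
    have h7 := hF_totallyReal ((φs ⟨0, hg⟩).comp (algebraMap F K)) r
    rw [RingHom.comp_apply] at h7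
    rw [hr, h7] at h6
    exact lt_irrefl 0 h6
  have hli1ω : LinearIndependent F ![(1 : K), ωK] := by
    rw [LinearIndependent.pair_iff]
    intro s t hst
    rw [Algebra.smul_def, Algebra.smul_def, mul_one] at hst
    by_cases htz : t = 0
    · subst htz
      simp only [map_zero, zero_mul, add_zero] at hst
      exact ⟨by simpa using (algebraMap F K).injective (by simpa using hst), rfl⟩
    · exfalso
      apply hω_not (-s / t)
      have htK : algebraMap F K t ≠ 0 := fun h => htz ((algebraMap F K).injective (by simpa using h))
      have h12 : algebraMap F K t * ωK = - algebraMap F K s := by linear_combination hst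
      rw [map_div₀, map_neg, eq_div_iff htK]
      linear_combination h12
  have hspan1ω : Submodule.span F {(1 : K), ωK} = ⊤ := by
    have h8 : ({(1 : K), ωK} : Set K) = Set.range ![(1 : K), ωK] := by
      ext z
      simp only [Set.mem_insert_iff, Set.mem_singleton_iff, Set.mem_range]
      rw [Fin.exists_fin_two]
      exact ⟨fun h => h.imp Eq.symm Eq.symm, fun h => h.imp Eq.symm Eq.symm⟩
    rw [h8]
    apply Submodule.eq_top_of_finrank_eq
    rw [finrank_span_eq_card hli1ω, hquadratic, Fintype.card_fin]
  -- write w0/w1 in terms of 1 and ωK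
  obtain ⟨bb, aa, hab⟩ := Submodule.mem_span_pair.mp
    (show w0 / w1 ∈ Submodule.span F {(1 : K), ωK} by rw [hspan1ω]; trivial)
  rw [Algebra.smul_def, Algebra.smul_def, mul_one] at hab
  -- hab : algebraMap bb + algebraMap aa * ωK = w0 / w1
  have hab' : w0 = (algebraMap F K bb + algebraMap F K aa * ωK) * w1 := by
    rw [hab, div_mul_cancel₀ _ hw1]
  have haa : aa ≠ 0 := by
    intro h
    subst h
    have h9 := (LinearIndependent.pair_iff.mp hpair 1 (-bb) ?_).1
    · simpa using h9
    · rw [Algebra.smul_def, Algebra.smul_def, map_one, one_mul, map_neg, hab']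
      simp only [map_zero, zero_mul, add_zero]
      ring
  obtain ⟨t, ht⟩ := exists_unit_sign F hnarrow aa haa
  set tF : F := ((t : 𝓞 F) : F) with htFdef
  have htF0 : tF ≠ 0 := fun h => t.ne_zero
    ((IsFractionRing.injective (𝓞 F) F) (by rw [map_zero]; exact h))
  have htK : algebraMap F K tF ≠ 0 := fun h => htF0 ((algebraMap F K).injective (by simpa using h))
  have hsmul : ∀ (u : 𝓞 F) (y : K), u • y = iota F K u * y := by
    intro u y
    rw [Algebra.smul_def, IsScalarTower.algebraMap_apply (𝓞 F) F K]
    rfl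
  have hcoe_tinv : ((↑t⁻¹ : 𝓞 F) : F) * tF = 1 := by
    have : ((↑t⁻¹ : 𝓞 F) * (t : 𝓞 F) : 𝓞 F) = 1 := by exact_mod_cast t.inv_mul
    calc ((↑t⁻¹ : 𝓞 F) : F) * tF = (((↑t⁻¹ : 𝓞 F) * (t : 𝓞 F) : 𝓞 F) : F) := by push_cast; ring
    _ = 1 := by rw [this]; simp
  refine ⟨w0, algebraMap F K tF * w1, mul_ne_zero htK hw1, ?_, ?_⟩
  · intro x
    have hmem : x ∈ M ↔ x ∈ Submodule.span (𝓞 F) {w0, w1} := by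
      constructor
      · intro hx
        rw [← hNspan2]; exact hx
      · intro hx
        rw [← hNspan2] at hx; exact hx
    rw [hmem, Submodule.mem_span_pair]
    constructor
    · rintro ⟨u, v', huv⟩
      refine ⟨u, v' * ↑t⁻¹, ?_⟩
      rw [← huv, hsmul, hsmul]
      congr 1
      simp only [iota]
      rw [← mul_assoc, ← map_mul]
      have hinv : ((↑t⁻¹ : 𝓞 F) : F) = tF⁻¹ := eq_inv_of_mul_eq_one_left hcoe_tinv
      congr 1
      push_cast
      have h14 := congrArg (algebraMap F K) hcoe_tinv
      push_cast at h14
      rw [mul_assoc, h14, mul_one]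
    · rintro ⟨u, v', rfl⟩
      refine ⟨u, v' * ↑t, ?_⟩
      rw [hsmul, hsmul]
      congr 1
      simp only [iota]
      rw [← mul_assoc, ← map_mul]
      congr 1
  · intro i
    have him : ∀ x : F, (((φs i).comp (algebraMap F K)) x).im = 0 :=
      hF_totallyReal ((φs i).comp (algebraMap F K))
    set ψ := (φs i).comp (algebraMap F K) with hψ
    set τi := realEmbed ψ him with hτi
    have hratio : w0 / (algebraMap F K tF * w1)
        = algebraMap F K (bb / tF) + algebraMap F K (aa / tF) * ωK := by
      rw [hab', map_div₀, map_div₀]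
      field_simp
    rw [hratio]
    have hmapped : (φs i) (algebraMap F K (bb / tF) + algebraMap F K (aa / tF) * ωK)
        = ((τi (bb / tF) : ℝ) : ℂ) + ((τi (aa / tF) : ℝ) : ℂ) * (φs i) ωK := by
      rw [map_add, map_mul]
      rw [show (φs i) (algebraMap F K (bb / tF)) = ψ (bb / tF) from rfl]
      rw [show (φs i) (algebraMap F K (aa / tF)) = ψ (aa / tF) from rfl]
      rw [realEmbed_spec ψ him, realEmbed_spec ψ him]
    rw [hmapped]
    simp only [Complex.add_im, Complex.mul_im, Complex.ofReal_re, Complex.ofReal_im,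
      zero_mul, add_zero, zero_add]
    have hpos : 0 < τi (aa / tF) := by
      have h10 := ht τi
      rw [map_div₀]
      rcases mul_pos_iff.mp h10 with ⟨h11, h12⟩ | ⟨h11, h12⟩
      · exact div_pos h11 h12
      · exact div_pos_of_neg_of_neg h11 h12
    exact mul_pos hpos (hωKtype i)
end
end

section
/- With 𝔠, ξ₁, ξ₂ as above and A ∈ M₂(O_F) the matrix satisfying (ω_K, 1)ᵀ = A·(ξ₁, ξ₂)ᵀ: the determinant of A is totally positive, det(A)·O_F = N_{K/F}(𝔠), and gcd(det(A), N) = 1. -/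
open NumberField Complex

noncomputable section

set_option maxHeartbeats 1000000 in
theorem stmt16 (F K : Type) [Field F] [Field K] [NumberField F] [NumberField K]
    [Algebra F K] (τ : F →+* ℝ) (σ : K →+* ℂ)
    [Algebra (𝓞 F) (𝓞 K)] [Module.Finite (𝓞 F) (𝓞 K)] [Module.Free (𝓞 F) (𝓞 K)]
    (halg : ∀ u : 𝓞 F, ((algebraMap (𝓞 F) (𝓞 K) u : 𝓞 K) : K) = iota F K u)
    (hcompat : ∀ x : F, σ (algebraMap F K x) = (τ x : ℂ))
    (hF_totallyReal : ∀ φ : F →+* ℂ, ∀ x : F, (φ x).im = 0)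
    (hquadratic : Module.finrank F K = 2)
    (hnarrow : ∀ I : Ideal (𝓞 F), I ≠ ⊥ →
      ∃ x : 𝓞 F, TotPos F x ∧ I = Ideal.span {x})
    (ωK : K) (hωKint : IsIntegral ℤ ωK) (hωKim : 0 < (σ ωK).im)
    (hgen : ∀ x : 𝓞 K, ∃ u v : 𝓞 F, (x : K) = iota F K u * ωK + iota F K v)
    (g : ℕ) (hg : 0 < g) (φs : Fin g → (K →+* ℂ))
    (hcover : ∀ ψ : K →+* ℂ, ∃ i, ψ = φs i ∨ ψ = (starRingEnd ℂ).comp (φs i))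
    (hdist : ∀ i j, φs i ≠ (starRingEnd ℂ).comp (φs j))
    (hφ0 : φs ⟨0, hg⟩ = σ)
    (hωKtype : ∀ i, 0 < (φs i ωK).im)
    (N : ℕ) (hN : 0 < N)
    (c : Ideal (𝓞 K)) (hc : c ≠ ⊥)
    (hcop : IsCoprime c (Ideal.span {(N : 𝓞 K)}))
    (ξ₁ ξ₂ : K) (hξ₂ : ξ₂ ≠ 0)
    (hcinv : ∀ x : K,
      x ∈ (((c : FractionalIdeal (nonZeroDivisors (𝓞 K)) K))⁻¹ :
          FractionalIdeal (nonZeroDivisors (𝓞 K)) K).coeToSubmodule ↔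
        ∃ u v : 𝓞 F, x = iota F K u * ξ₁ + iota F K v * ξ₂)
    (hξH : ∀ i, 0 < (φs i (ξ₁ / ξ₂)).im)
    -- A : matrix over O_F with (ω_K, 1)ᵀ = A (ξ₁, ξ₂)ᵀ
    (A : Matrix (Fin 2) (Fin 2) (𝓞 F))
    (hA1 : ωK = iota F K (A 0 0) * ξ₁ + iota F K (A 0 1) * ξ₂)
    (hA2 : (1 : K) = iota F K (A 1 0) * ξ₁ + iota F K (A 1 1) * ξ₂) :
    TotPos F A.det ∧
    Ideal.span {A.det} = Ideal.relNorm (𝓞 F) c ∧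
    (∀ d : 𝓞 F, d ∣ A.det → d ∣ (N : 𝓞 F) → IsUnit d) := by
  classical
  have hρ : ∀ u : 𝓞 F, iota F K u = algebraMap (𝓞 F) K u := fun u => rfl
  simp only [hρ] at hgen hcinv hA1 hA2 halg
  set ρ : 𝓞 F →+* K := (algebraMap (𝓞 F) K : 𝓞 F →+* K) with hρdef
  have hρinj : Function.Injective ρ := by
    have : (ρ : 𝓞 F → K) = (algebraMap F K) ∘ (algebraMap (𝓞 F) F) := by
      funext u
      exact IsScalarTower.algebraMap_apply (𝓞 F) F K u
    rw [hρdef, this]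
    exact (algebraMap F K).injective.comp NumberField.RingOfIntegers.coe_injective
  -- ωK as an element of 𝓞 K
  set ω' : 𝓞 K := ⟨ωK, hωKint⟩ with hω'
  have hω'K : (ω' : K) = ωK := rfl
  -- uniqueness of coordinates w.r.t. (ωK, 1)
  have coords : ∀ u v u' v' : 𝓞 F,
      ρ u * ωK + ρ v = ρ u' * ωK + ρ v' → u = u' ∧ v = v' := by
    intro u v u' v' h
    have hu : u = u' := by
      by_contra hne
      have h1 : (algebraMap F K) ((u : F) - (u' : F)) * ωK
          = (algebraMap F K) ((v' : F) - (v : F)) := by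
        have hρ' : ∀ w : 𝓞 F, ρ w = algebraMap F K (w : F) := fun w =>
          IsScalarTower.algebraMap_apply (𝓞 F) F K w
        rw [hρ', hρ', hρ', hρ'] at h
        rw [map_sub, map_sub]
        ring_nf
        linear_combination h
      have hne' : ((u : F) - (u' : F)) ≠ 0 := by
        intro h0
        exact hne (NumberField.RingOfIntegers.coe_injective (sub_eq_zero.mp h0))
      have hmapne : algebraMap F K ((u : F) - (u' : F)) ≠ 0 := fun h0 =>
        hne' ((algebraMap F K).injective (by rw [h0, map_zero]))
      have hωval : ωK = algebraMap F K (((v' : F) - (v : F)) / ((u : F) - (u' : F))) := by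
        rw [map_div₀, eq_div_iff hmapne]
        linear_combination h1
      have : (σ ωK).im = 0 := by
        rw [hωval, hcompat]
        exact Complex.ofReal_im _
      linarith [hωKim]
    refine ⟨hu, ?_⟩
    subst hu
    have : ρ v = ρ v' := by linear_combination h
    exact hρinj this
  -- basis of 𝓞 K over 𝓞 F
  have cadd : ∀ x y : 𝓞 K, ((x + y : 𝓞 K) : K) = (x : K) + (y : K) := fun x y =>
    map_add (algebraMap (𝓞 K) K) x y
  have cmul : ∀ x y : 𝓞 K, ((x * y : 𝓞 K) : K) = (x : K) * (y : K) := fun x y =>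
    map_mul (algebraMap (𝓞 K) K) x y
  have cone : ((1 : 𝓞 K) : K) = 1 := map_one (algebraMap (𝓞 K) K)
  have czero : ((0 : 𝓞 K) : K) = 0 := map_zero (algebraMap (𝓞 K) K)
  have hsm : ∀ (r : 𝓞 F) (x : 𝓞 K), ((r • x : 𝓞 K) : K) = ρ r * (x : K) := by
    intro r x
    rw [Algebra.smul_def]
    rw [NumberField.RingOfIntegers.coe_eq_algebraMap, map_mul]
    rw [← NumberField.RingOfIntegers.coe_eq_algebraMap, ← NumberField.RingOfIntegers.coe_eq_algebraMap]
    rw [halg r]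
  have hLI : LinearIndependent (𝓞 F) ![ω', (1 : 𝓞 K)] := by
    rw [LinearIndependent.pair_iff]
    intro s t hst
    have hst' := congrArg (fun x : 𝓞 K => (x : K)) hst
    simp only [cadd, hsm, cone, czero, hω'K, mul_one] at hst'
    have hK : ρ s * ωK + ρ t = ρ 0 * ωK + ρ 0 := by
      simp only [map_zero]
      linear_combination hst'
    exact coords s t 0 0 hK
  have hspan : ⊤ ≤ Submodule.span (𝓞 F) (Set.range ![ω', (1 : 𝓞 K)]) := by
    intro x _
    obtain ⟨u, v, huv⟩ := hgen x
    have hx : x = u • ω' + v • (1 : 𝓞 K) := by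
      apply NumberField.RingOfIntegers.ext
      simp only [cadd, hsm, cone, hω'K, mul_one]
      exact huv
    rw [hx]
    exact Submodule.add_mem _
      (Submodule.smul_mem _ _ (Submodule.subset_span ⟨0, rfl⟩))
      (Submodule.smul_mem _ _ (Submodule.subset_span ⟨1, rfl⟩))
  set e : Module.Basis (Fin 2) (𝓞 F) (𝓞 K) := Module.Basis.mk hLI hspan with he
  have he0 : e 0 = ω' := by rw [he, Module.Basis.mk_apply]; rfl
  have he1 : e 1 = 1 := by rw [he, Module.Basis.mk_apply]; rfl
  -- representation of elements in the basis
  have hrep : ∀ y : 𝓞 K, (y : K) = ρ (e.repr y 0) * ωK + ρ (e.repr y 1) := by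
    intro y
    conv_lhs => rw [← Module.Basis.sum_repr e y]
    rw [Fin.sum_univ_two, he0, he1]
    simp only [cadd, hsm, cone, hω'K, mul_one]
  -- norm via explicit coordinates
  have normdet : ∀ (x : 𝓞 K) (p q r s : 𝓞 F),
      (x : K) * ωK = ρ p * ωK + ρ q →
      (x : K) = ρ r * ωK + ρ s →
      Algebra.norm (𝓞 F) x = p * s - q * r := by
    intro x p q r s h1 h2
    have hL := Algebra.norm_eq_matrix_det e x
    rw [Matrix.det_fin_two] at hL
    have hentry : ∀ i j, Algebra.leftMulMatrix e x i j = e.repr (x * e j) i := fun i j =>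
      Algebra.leftMulMatrix_eq_repr_mul e x i j
    have hx0 : ((x * e 0 : 𝓞 K) : K) = (x : K) * ωK := by
      rw [he0, cmul, hω'K]
    have hx1 : ((x * e 1 : 𝓞 K) : K) = (x : K) := by
      rw [he1, cmul, cone, mul_one]
    have c0 := coords (e.repr (x * e 0) 0) (e.repr (x * e 0) 1) p q
      (by rw [← hrep (x * e 0), hx0, h1])
    have c1 := coords (e.repr (x * e 1) 0) (e.repr (x * e 1) 1) r s
      (by rw [← hrep (x * e 1), hx1, h2])
    rw [hL, hentry 0 0, hentry 1 1, hentry 0 1, hentry 1 0,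
      c0.1, c0.2, c1.1, c1.2]
    ring
  -- Part 1: total positivity
  have htp : TotPos F A.det := by
    show ∀ τ' : F →+* ℝ, 0 < τ' ((A.det : 𝓞 F) : F)
    intro τ'
    obtain ⟨i, hφi⟩ : ∃ i, ∀ f : F, φs i (algebraMap F K f) = ((τ' f : ℝ) : ℂ) := by
      letI : Algebra F ℂ := (Complex.ofRealHom.comp τ').toAlgebra
      have halgmap : (algebraMap F ℂ : F →+* ℂ) = Complex.ofRealHom.comp τ' := rfl
      haveI : NoZeroSMulDivisors F ℂ :=
        ⟨fun {c x} h => by rwa [Algebra.smul_def, mul_eq_zero, map_eq_zero] at h⟩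
      haveI : Algebra.IsAlgebraic F K := Algebra.IsAlgebraic.of_finite F K
      let ψ : K →ₐ[F] ℂ := IsAlgClosed.lift
      obtain ⟨i, hi⟩ := hcover ψ.toRingHom
      refine ⟨i, fun f => ?_⟩
      have hcψ : ψ.toRingHom (algebraMap F K f) = ((τ' f : ℝ) : ℂ) := by
        have := ψ.commutes f
        simpa [halgmap] using this
      rcases hi with h | h
      · rw [← h]; exact hcψ
      · have h3 : (starRingEnd ℂ) (φs i (algebraMap F K f)) = ((τ' f : ℝ) : ℂ) := by
          rw [← RingHom.comp_apply, ← h]; exact hcψ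
        have h2 := congrArg (starRingEnd ℂ) h3
        rwa [Complex.conj_conj, Complex.conj_ofReal] at h2
    set φ := φs i with hφdef
    have hZ2 : φ ξ₂ ≠ 0 := fun h0 => hξ₂ (φ.injective (by rw [h0, map_zero]))
    set z : ℂ := φ (ξ₁ / ξ₂) with hz
    have hzim : 0 < z.im := hξH i
    have hwim : 0 < (φ ωK).im := hωKtype i
    have hz1 : φ ξ₁ = z * φ ξ₂ := by
      rw [hz, map_div₀]
      field_simp
    have hρφ : ∀ u : 𝓞 F, φ (ρ u) = ((τ' (u : F) : ℝ) : ℂ) := by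
      intro u
      rw [show ρ u = algebraMap F K (u : F) from IsScalarTower.algebraMap_apply (𝓞 F) F K u]
      exact hφi _
    have hE1 : φ ωK = ((τ' (A 0 0 : F) : ℝ) : ℂ) * φ ξ₁ + ((τ' (A 0 1 : F) : ℝ) : ℂ) * φ ξ₂ := by
      rw [← hρφ, ← hρφ, ← map_mul, ← map_mul, ← map_add]
      exact congrArg φ hA1
    have hE2 : (1 : ℂ) = ((τ' (A 1 0 : F) : ℝ) : ℂ) * φ ξ₁ + ((τ' (A 1 1 : F) : ℝ) : ℂ) * φ ξ₂ := by
      rw [← hρφ, ← hρφ, ← map_mul, ← map_mul, ← map_add, ← map_one φ]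
      exact congrArg φ hA2
    set a00 := τ' (A 0 0 : F) with ha00
    set a01 := τ' (A 0 1 : F) with ha01
    set a10 := τ' (A 1 0 : F) with ha10
    set a11 := τ' (A 1 1 : F) with ha11
    set D : ℂ := (a10 : ℂ) * z + (a11 : ℂ) with hD
    have hDZ : D * φ ξ₂ = 1 := by
      rw [hD]
      linear_combination -hE2 - (a10 : ℂ) * hz1
    have hwD : φ ωK * D = (a00 : ℂ) * z + (a01 : ℂ) := by
      linear_combination D * hE1 + (a00 : ℂ) * z * hDZ + (a01 : ℂ) * hDZ
        + (a00 : ℂ) * D * hz1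
    have hDne : D ≠ 0 := by
      intro h0
      rw [h0, zero_mul] at hDZ
      exact zero_ne_one hDZ
    have hdet : ((A.det : 𝓞 F) : F) = (A 0 0 : F) * (A 1 1 : F) - (A 0 1 : F) * (A 1 0 : F) := by
      rw [Matrix.det_fin_two]
      simp only [NumberField.RingOfIntegers.coe_eq_algebraMap, map_sub, map_mul]
    have hkey : τ' ((A.det : 𝓞 F) : F) * z.im = (φ ωK).im * Complex.normSq D := by
      have h1 : (φ ωK * D * (starRingEnd ℂ) D).im = (φ ωK).im * Complex.normSq D := by
        rw [mul_assoc, Complex.mul_conj]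
        simp [Complex.mul_im]
      have h2 : (φ ωK * D * (starRingEnd ℂ) D).im = τ' ((A.det : 𝓞 F) : F) * z.im := by
        rw [hwD, hdet, map_sub, map_mul, map_mul, ← ha00, ← ha01, ← ha10, ← ha11, hD]
        simp only [map_add, map_mul, Complex.conj_ofReal, Complex.add_im, Complex.add_re,
          Complex.mul_im, Complex.mul_re, Complex.ofReal_re, Complex.ofReal_im,
          RingHomCompTriple.comp_apply, Complex.conj_re, Complex.conj_im]
        ring
      rw [← h2, h1]
    nlinarith [hkey, hzim, hwim, Complex.normSq_pos.mpr hDne]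
  have hdet0 : A.det ≠ 0 := by
    intro h0
    have := htp τ
    rw [h0] at this
    simp at this
  -- fractional ideal set-up
  set c' : FractionalIdeal (nonZeroDivisors (𝓞 K)) K := (c : FractionalIdeal (nonZeroDivisors (𝓞 K)) K) with hc'def
  have hc0 : c' ≠ 0 := FractionalIdeal.coeIdeal_ne_zero.mpr hc
  have hinv : c' * c'⁻¹ = 1 := mul_inv_cancel₀ hc0
  have hmemO : ∀ y : K, y ∈ c'⁻¹ ↔ ∃ u v : 𝓞 F, y = ρ u * ξ₁ + ρ v * ξ₂ := by
    intro y
    rw [← FractionalIdeal.mem_coe]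
    exact hcinv y
  -- adjugate identities
  have hdetρ : ρ A.det = ρ (A 0 0) * ρ (A 1 1) - ρ (A 0 1) * ρ (A 1 0) := by
    rw [Matrix.det_fin_two, map_sub, map_mul, map_mul]
  have hadj1 : ρ A.det * ξ₁ = ρ (A 1 1) * ωK - ρ (A 0 1) := by
    linear_combination ξ₁ * hdetρ - ρ (A 1 1) * hA1 + ρ (A 0 1) * hA2
  have hadj2 : ρ A.det * ξ₂ = - (ρ (A 1 0)) * ωK + ρ (A 0 0) := by
    linear_combination ξ₂ * hdetρ + ρ (A 1 0) * hA1 - ρ (A 0 0) * hA2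
  -- the auxiliary ideal J
  have csub : ∀ x y : 𝓞 K, ((x - y : 𝓞 K) : K) = (x : K) - (y : K) := fun x y =>
    map_sub (algebraMap (𝓞 K) K) x y
  have cneg : ∀ x : 𝓞 K, ((-x : 𝓞 K) : K) = -(x : K) := fun x =>
    map_neg (algebraMap (𝓞 K) K) x
  have cnat : ∀ n : ℕ, ((n : 𝓞 K) : K) = (n : K) := fun n =>
    map_natCast (algebraMap (𝓞 K) K) n
  have hJle : FractionalIdeal.spanSingleton (nonZeroDivisors (𝓞 K)) (ρ A.det) * c'⁻¹ ≤ 1 := by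
    intro y hy
    obtain ⟨y', hy', rfl⟩ := FractionalIdeal.mem_singleton_mul.mp hy
    obtain ⟨u, v, rfl⟩ := (hmemO y').mp hy'
    refine (FractionalIdeal.mem_one_iff _).mpr
      ⟨algebraMap (𝓞 F) (𝓞 K) u *
          (algebraMap (𝓞 F) (𝓞 K) (A 1 1) * ω' - algebraMap (𝓞 F) (𝓞 K) (A 0 1)) +
        algebraMap (𝓞 F) (𝓞 K) v *
          (-(algebraMap (𝓞 F) (𝓞 K) (A 1 0)) * ω' + algebraMap (𝓞 F) (𝓞 K) (A 0 0)), ?_⟩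
    rw [← NumberField.RingOfIntegers.coe_eq_algebraMap]
    simp only [cadd, cmul, csub, cneg, halg, hω'K]
    linear_combination (-(ρ u)) * hadj1 - ρ v * hadj2
  obtain ⟨J, hJ⟩ := FractionalIdeal.le_one_iff_exists_coeIdeal.mp hJle
  have hcJ : c * J = Ideal.span {algebraMap (𝓞 F) (𝓞 K) A.det} := by
    apply FractionalIdeal.coeIdeal_injective (K := K)
    show ((c * J : Ideal (𝓞 K)) : FractionalIdeal (nonZeroDivisors (𝓞 K)) K)
      = ((Ideal.span {algebraMap (𝓞 F) (𝓞 K) A.det} : Ideal (𝓞 K)) :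
          FractionalIdeal (nonZeroDivisors (𝓞 K)) K)
    rw [FractionalIdeal.coeIdeal_mul, hJ, FractionalIdeal.coeIdeal_span_singleton]
    rw [show (algebraMap (𝓞 K) K) (algebraMap (𝓞 F) (𝓞 K) A.det) = ρ A.det from halg A.det]
    rw [← hc'def]
    rw [mul_left_comm c' (FractionalIdeal.spanSingleton (nonZeroDivisors (𝓞 K)) (ρ A.det)) c'⁻¹]
    rw [hinv, mul_one]
  -- norms of elements of c are divisible by det A
  have hnormc : ∀ x ∈ c, A.det ∣ Algebra.norm (𝓞 F) x := by
    intro x hx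
    have hxi1 : ξ₁ ∈ c'⁻¹ := (hmemO ξ₁).mpr ⟨1, 0, by simp⟩
    have hxi2 : ξ₂ ∈ c'⁻¹ := (hmemO ξ₂).mpr ⟨0, 1, by simp⟩
    have hmulmem : ∀ y ∈ c'⁻¹, ∃ t : 𝓞 K, (t : K) = (x : K) * y := by
      intro y hy
      have h1 : (algebraMap (𝓞 K) K x) ∈ c' := by
        rw [hc'def]
        exact (FractionalIdeal.mem_coeIdeal _).mpr ⟨x, hx, rfl⟩
      have h2 : algebraMap (𝓞 K) K x * y ∈ c' * c'⁻¹ := FractionalIdeal.mul_mem_mul h1 hy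
      rw [hinv] at h2
      obtain ⟨t, ht⟩ := (FractionalIdeal.mem_one_iff _).mp h2
      exact ⟨t, by rw [NumberField.RingOfIntegers.coe_eq_algebraMap, ht]⟩
    obtain ⟨t₁, ht₁⟩ := hmulmem ξ₁ hxi1
    obtain ⟨t₂, ht₂⟩ := hmulmem ξ₂ hxi2
    obtain ⟨u₁, v₁, hu₁⟩ := hgen t₁
    obtain ⟨u₂, v₂, hu₂⟩ := hgen t₂
    have E1 : (x : K) * ξ₁ = ρ u₁ * ωK + ρ v₁ := by rw [← ht₁]; exact hu₁
    have E2 : (x : K) * ξ₂ = ρ u₂ * ωK + ρ v₂ := by rw [← ht₂]; exact hu₂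
    have hx1 : (x : K) * ωK = ρ (A 0 0 * u₁ + A 0 1 * u₂) * ωK + ρ (A 0 0 * v₁ + A 0 1 * v₂) := by
      simp only [map_add, map_mul]
      linear_combination (x : K) * hA1 + ρ (A 0 0) * E1 + ρ (A 0 1) * E2
    have hx2 : (x : K) = ρ (A 1 0 * u₁ + A 1 1 * u₂) * ωK + ρ (A 1 0 * v₁ + A 1 1 * v₂) := by
      simp only [map_add, map_mul]
      linear_combination (x : K) * hA2 + ρ (A 1 0) * E1 + ρ (A 1 1) * E2
    rw [normdet x _ _ _ _ hx1 hx2]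
    exact ⟨u₁ * v₂ - u₂ * v₁, by rw [Matrix.det_fin_two]; ring⟩
  have hnormJ : ∀ x ∈ J, A.det ∣ Algebra.norm (𝓞 F) x := by
    intro x hx
    have hxK : (algebraMap (𝓞 K) K x) ∈ (J : FractionalIdeal (nonZeroDivisors (𝓞 K)) K) :=
      (FractionalIdeal.mem_coeIdeal _).mpr ⟨x, hx, rfl⟩
    rw [hJ] at hxK
    obtain ⟨y, hy, hxy⟩ := FractionalIdeal.mem_singleton_mul.mp hxK
    obtain ⟨u, v, rfl⟩ := (hmemO y).mp hy
    have h1 : ωK * (ρ u * ξ₁ + ρ v * ξ₂) ∈ c'⁻¹ := by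
      have h2 := Submodule.smul_mem
        ((c'⁻¹ : FractionalIdeal (nonZeroDivisors (𝓞 K)) K) : Submodule (𝓞 K) K) ω'
        (FractionalIdeal.mem_coe.mpr hy)
      rwa [Algebra.smul_def, ← NumberField.RingOfIntegers.coe_eq_algebraMap, hω'K,
        FractionalIdeal.mem_coe] at h2
    obtain ⟨u', v', hy'⟩ := (hmemO _).mp h1
    rw [← NumberField.RingOfIntegers.coe_eq_algebraMap] at hxy
    have E1' : (x : K) * ωK
        = ρ (u' * A 1 1 - v' * A 1 0) * ωK + ρ (v' * A 0 0 - u' * A 0 1) := by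
      simp only [map_sub, map_mul]
      linear_combination ωK * hxy + ρ A.det * hy' + ρ u' * hadj1 + ρ v' * hadj2
    have E2' : (x : K) = ρ (u * A 1 1 - v * A 1 0) * ωK + ρ (v * A 0 0 - u * A 0 1) := by
      simp only [map_sub, map_mul]
      linear_combination hxy + ρ u * hadj1 + ρ v * hadj2
    rw [normdet x _ _ _ _ E1' E2']
    exact ⟨u' * v - u * v', by rw [Matrix.det_fin_two]; ring⟩
  -- conclude part 2
  have hpart2 : Ideal.span {A.det} = Ideal.relNorm (𝓞 F) c := by
    have h1 : Ideal.relNorm (𝓞 F) c ≤ Ideal.span {A.det} := by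
      rw [Ideal.relNorm_apply, Ideal.span_le]
      rintro _ ⟨x, hx, rfl⟩
      exact Ideal.mem_span_singleton.mpr (by rw [Algebra.intNorm_eq_norm]; exact hnormc x hx)
    have h2 : Ideal.relNorm (𝓞 F) J ≤ Ideal.span {A.det} := by
      rw [Ideal.relNorm_apply, Ideal.span_le]
      rintro _ ⟨x, hx, rfl⟩
      exact Ideal.mem_span_singleton.mpr (by rw [Algebra.intNorm_eq_norm]; exact hnormJ x hx)
    have h3 : Ideal.relNorm (𝓞 F) c * Ideal.relNorm (𝓞 F) J = Ideal.span {A.det} ^ 2 := by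
      rw [← Ideal.spanNorm_eq, ← Ideal.spanNorm_eq, ← Ideal.spanNorm_mul, hcJ,
        Ideal.spanNorm_singleton]
      have hn : Algebra.norm (𝓞 F) (algebraMap (𝓞 F) (𝓞 K) A.det) = A.det ^ 2 := by
        have hcard := Algebra.norm_algebraMap_of_basis e A.det
        simpa using hcard
      rw [Algebra.intNorm_eq_norm, hn, ← Ideal.span_singleton_pow]
    obtain ⟨P, hP⟩ := Ideal.dvd_iff_le.mpr h1
    obtain ⟨Q, hQ⟩ := Ideal.dvd_iff_le.mpr h2
    have hd0 : (Ideal.span {A.det} : Ideal (𝓞 F)) ≠ 0 := by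
      rw [Ideal.zero_eq_bot, Ne, Ideal.span_singleton_eq_bot]
      exact hdet0
    have hPQ : P * Q = 1 := by
      have h4 : Ideal.span {A.det} ^ 2 * (P * Q) = Ideal.span {A.det} ^ 2 * 1 := by
        rw [mul_one]
        conv_rhs => rw [← h3, hP, hQ]
        ring
      exact mul_left_cancel₀ (pow_ne_zero 2 hd0) h4
    have hPtop : P = 1 := by
      have hle : (1 : Ideal (𝓞 F)) ≤ P := hPQ ▸ Ideal.mul_le_left
      have hge : P ≤ 1 := by rw [Ideal.one_eq_top]; exact le_top
      exact le_antisymm hge hle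
    rw [hP, hPtop, mul_one]
  refine ⟨htp, hpart2, ?_⟩
  -- Part 3
  intro d₀ hdd hdN
  obtain ⟨x, hxc, y, hy, hxy⟩ := Ideal.isCoprime_iff_exists.mp hcop
  obtain ⟨t, hyt⟩ := Ideal.mem_span_singleton.mp hy
  obtain ⟨p, q, hpq⟩ := hgen t
  obtain ⟨m, n, hmn⟩ := hgen (ω' * ω')
  have hxeq : x = 1 - (N : 𝓞 K) * t := by
    rw [hyt] at hxy
    linear_combination hxy
  have hωsq : ωK * ωK = ρ m * ωK + ρ n := by
    rw [← hmn, cmul, hω'K]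
  have hxcoe : (x : K) = 1 - (N : K) * (t : K) := by
    rw [hxeq, csub, cone, cmul, cnat]
  have hxK : (x : K) = ρ (0 - N * p) * ωK + ρ (1 - N * q) := by
    simp only [map_sub, map_mul, map_zero, map_one, map_natCast]
    rw [hxcoe, hpq]
    ring
  have hxωK : (x : K) * ωK = ρ (1 - N * (p * m + q)) * ωK + ρ (0 - N * (p * n)) := by
    simp only [map_sub, map_mul, map_zero, map_one, map_natCast, map_add]
    rw [hxcoe]
    linear_combination (-(N : K)) * ωK * hpq - (N : K) * ρ p * hωsq
  have hnx := normdet x _ _ _ _ hxωK hxK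
  have hdvdnorm : d₀ ∣ Algebra.norm (𝓞 F) x := by
    have hmem : Algebra.norm (𝓞 F) x ∈ Ideal.relNorm (𝓞 F) c :=
      Ideal.norm_mem_relNorm (𝓞 F) c hxc
    rw [← hpart2] at hmem
    exact dvd_trans hdd (Ideal.mem_span_singleton.mp hmem)
  have h1 : d₀ ∣ Algebra.norm (𝓞 F) x - 1 :=
    dvd_trans hdN ⟨(N : 𝓞 F) * (p * m + q) * q - (p * m + q) - q - (N : 𝓞 F) * (p * n) * p,
      by rw [hnx]; ring⟩
  have h2 : d₀ ∣ (1 : 𝓞 F) := by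
    have := dvd_sub hdvdnorm h1
    simpa using this
  exact isUnit_of_dvd_one h2
end
end

section
/- Let (K*, {ψ_j}_{j=1}^n) be the reflex of the CM-type (K, {φ_i}), and g: (K*)^× → K^× the reflex norm d ↦ ∏_j ψ_j(d). If d ∈ (K*)^× satisfies d ≡* 1 (mod N·O_{K*}), then g(d) ≡* 1 (mod N·O_K). -/
open NumberField Complex

noncomputable section

/-- Multiplicative congruence `ν ≡* 1 (mod N·O_K)`. -/
def MulCongOne (K : Type) [Field K] [NumberField K] (N : ℕ) (ν : K) : Prop :=
  ∃ α β : 𝓞 K, (β : K) ≠ 0 ∧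
    IsCoprime (Ideal.span {β}) (Ideal.span {(N : 𝓞 K)}) ∧
    ν = (α : K) / (β : K) ∧ (N : 𝓞 K) ∣ (α - β)

private lemma dvd_prod_sub_prod' {R ι : Type*} [CommRing R] (s : Finset ι) (f g : ι → R) (c : R)
    (h : ∀ i ∈ s, c ∣ f i - g i) : c ∣ (∏ i ∈ s, f i) - ∏ i ∈ s, g i := by
  classical
  induction s using Finset.induction_on with
  | empty => simp
  | @insert a s hx ih =>
    rw [Finset.prod_insert hx, Finset.prod_insert hx]
    have h1 : c ∣ f a - g a := h a (Finset.mem_insert_self a s)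
    have h2 : c ∣ (∏ i ∈ s, f i) - ∏ i ∈ s, g i :=
      ih fun i hi => h i (Finset.mem_insert_of_mem hi)
    have heq : f a * ∏ i ∈ s, f i - g a * ∏ i ∈ s, g i
        = f a * ((∏ i ∈ s, f i) - ∏ i ∈ s, g i) + (f a - g a) * ∏ i ∈ s, g i := by ring
    rw [heq]
    exact dvd_add (h2.mul_left _) (h1.mul_right _)

/-- the reflex norm `g : (K*)^× → K^×`, `d ↦ ∏_j ψ_j(d)`,
preserves the multiplicative congruence `≡* 1 (mod N)`. -/
theorem stmt17 (K Kstar : Type) [Field K] [NumberField K]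
    [Field Kstar] [NumberField Kstar]
    (σ : K →+* ℂ)
    -- the CM-type (K, {φ_i})
    (g : ℕ) (hg : 0 < g) (φs : Fin g → (K →+* ℂ))
    (hcover : ∀ ψ : K →+* ℂ, ∃ i, ψ = φs i ∨ ψ = (starRingEnd ℂ).comp (φs i))
    (hdist : ∀ i j, φs i ≠ (starRingEnd ℂ).comp (φs j))
    (hφ0 : φs ⟨0, hg⟩ = σ)
    -- the reflex type (K*, {ψ_j}) and the reflex norm map
    (n : ℕ) (hn : 0 < n) (ψs : Fin n → (Kstar →+* ℂ))
    (gmap : Kstar → K)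
    (hgmap : ∀ d : Kstar, σ (gmap d) = ∏ j : Fin n, ψs j d)
    (N : ℕ) (hN : 0 < N)
    (d : Kstar) (hd : d ≠ 0) (hcong : MulCongOne Kstar N d) :
    MulCongOne K N (gmap d) := by
  obtain ⟨α, β, hβ, hcop, hdq, hdvd⟩ := hcong
  have hσinj : Function.Injective σ := σ.injective
  have hNK : (N : K) ≠ 0 := Nat.cast_ne_zero.mpr hN.ne'
  have hNC : (N : ℂ) ≠ 0 := Nat.cast_ne_zero.mpr hN.ne'
  -- integrality of `gmap` of algebraic integers
  have hint : ∀ u : 𝓞 Kstar, IsIntegral ℤ (gmap (u : Kstar)) := by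
    intro u
    rw [← isIntegral_algHom_iff σ.toIntAlgHom hσinj]
    show IsIntegral ℤ (σ (gmap (u : Kstar)))
    rw [hgmap]
    have : ∀ j : Fin n, ψs j (u : Kstar) ∈ integralClosure ℤ ℂ := fun j =>
      (u.isIntegral_coe).map (ψs j).toIntAlgHom
    exact Subalgebra.prod_mem _ fun j _ => this j
  -- multiplicativity of gmap
  have hmul : ∀ x y : Kstar, gmap (x * y) = gmap x * gmap y := by
    intro x y
    apply hσinj
    rw [map_mul, hgmap, hgmap, hgmap, ← Finset.prod_mul_distrib]
    simp [map_mul]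
  have hone : gmap 1 = 1 := by
    apply hσinj
    rw [hgmap, map_one]
    simp
  -- key congruence transfer lemma
  have key : ∀ u w : 𝓞 Kstar, (N : 𝓞 Kstar) ∣ u - w →
      ∃ t : K, IsIntegral ℤ t ∧ gmap (u : Kstar) - gmap (w : Kstar) = N * t := by
    intro u w hdiv
    -- show the complex difference is divisible by N in the integral closure
    set R := integralClosure ℤ ℂ
    have hmemf : ∀ j : Fin n, ψs j (u : Kstar) ∈ R := fun j =>
      (u.isIntegral_coe).map (ψs j).toIntAlgHom
    have hmemg : ∀ j : Fin n, ψs j (w : Kstar) ∈ R := fun j =>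
      (w.isIntegral_coe).map (ψs j).toIntAlgHom
    obtain ⟨c, hc⟩ := hdiv
    have hmemc : ∀ j : Fin n, ψs j (c : Kstar) ∈ R := fun j =>
      (c.isIntegral_coe).map (ψs j).toIntAlgHom
    set f : Fin n → R := fun j => ⟨ψs j (u : Kstar), hmemf j⟩
    set g' : Fin n → R := fun j => ⟨ψs j (w : Kstar), hmemg j⟩
    have hdR : ∀ j ∈ Finset.univ, (N : R) ∣ f j - g' j := by
      intro j _
      refine ⟨⟨ψs j (c : Kstar), hmemc j⟩, ?_⟩
      ext
      push_cast [f, g']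
      rw [← map_sub, ← map_natCast (ψs j), ← map_mul]
      congr 1
      have : (u : Kstar) - (w : Kstar) = ((u - w : 𝓞 Kstar) : Kstar) := by push_cast; ring
      rw [this, hc]
      push_cast
      ring
    have hd2 : (N : R) ∣ (∏ j : Fin n, f j) - ∏ j : Fin n, g' j :=
      dvd_prod_sub_prod' _ _ _ _ hdR
    obtain ⟨t0, ht0⟩ := hd2
    -- transfer back to K
    refine ⟨(gmap (u : Kstar) - gmap (w : Kstar)) / N, ?_, by field_simp⟩
    rw [← isIntegral_algHom_iff σ.toIntAlgHom hσinj]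
    show IsIntegral ℤ (σ _)
    have hσval : σ ((gmap (u : Kstar) - gmap (w : Kstar)) / N) = (t0 : ℂ) := by
      rw [map_div₀, map_sub, hgmap, hgmap, map_natCast]
      have hprods : (∏ j : Fin n, ψs j (u : Kstar)) - ∏ j : Fin n, ψs j (w : Kstar)
          = (N : ℂ) * (t0 : ℂ) := by
        have h := congrArg (fun x : R => (x : ℂ)) ht0
        simp only [AddSubgroupClass.coe_sub, MulMemClass.coe_mul,
          SubmonoidClass.coe_finset_prod] at h
        have hN' : ((N : R) : ℂ) = (N : ℂ) := by push_cast; rfl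
        rw [hN'] at h
        simpa [f, g'] using h
      rw [hprods]
      field_simp
    rw [hσval]
    exact t0.2
  -- the numerator and denominator in K
  set a : Kstar := (α : Kstar)
  set b : Kstar := (β : Kstar)
  have hA : IsIntegral ℤ (gmap a) := hint α
  have hB : IsIntegral ℤ (gmap b) := hint β
  -- gmap b ≠ 0
  have hBne : gmap b ≠ 0 := by
    intro h0
    have : σ (gmap b) = 0 := by rw [h0, map_zero]
    rw [hgmap] at this
    rcases Finset.prod_eq_zero_iff.mp this with ⟨j, _, hj⟩
    exact hβ ((map_eq_zero (ψs j)).mp hj)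
  -- gmap d * gmap b = gmap a
  have hdb : d * b = a := by
    rw [hdq]; field_simp
  have hquot : gmap d = gmap a / gmap b := by
    rw [← hdb, hmul]
    field_simp
  -- the divisibility N ∣ gmap a - gmap b
  obtain ⟨t1, ht1int, ht1⟩ := key α β hdvd
  -- coprimality
  rw [Ideal.isCoprime_span_singleton_iff] at hcop
  obtain ⟨u, v, huv⟩ := hcop
  have hwd : (N : 𝓞 Kstar) ∣ (1 - v * N) - 1 := ⟨-v, by ring⟩
  obtain ⟨t2, ht2int, ht2⟩ := key (1 - v * N) 1 hwd
  have hub : gmap (((1 - v * N : 𝓞 Kstar)) : Kstar) = gmap ((u : Kstar)) * gmap b := by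
    have : ((1 - v * N : 𝓞 Kstar) : Kstar) = (u : Kstar) * b := by
      have : u * β = 1 - v * N := by rw [← huv]; ring
      rw [← this]; push_cast; ring
    rw [this, hmul]
  rw [show ((1 : 𝓞 Kstar) : Kstar) = 1 from map_one (algebraMap (𝓞 Kstar) Kstar), hone] at ht2
  have hU : IsIntegral ℤ (gmap ((u : Kstar))) := hint u
  -- assemble
  have ht2int' : IsIntegral ℤ t2 := ht2int
  refine ⟨⟨gmap a, hA⟩, ⟨gmap b, hB⟩, hBne, ?_, ?_, ?_⟩
  · refine (Ideal.isCoprime_span_singleton_iff _ _).mpr ?_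
    refine ⟨⟨gmap ((u : Kstar)), hU⟩, -⟨t2, ht2int⟩, ?_⟩
    have : gmap ((u : Kstar)) * gmap b + -t2 * N = 1 := by
      have h1 : gmap ((u : Kstar)) * gmap b - 1 = N * t2 := by rw [← hub, ← ht2]
      have : gmap ((u : Kstar)) * gmap b = 1 + N * t2 := by linear_combination h1
      rw [this]; ring
    exact_mod_cast NumberField.RingOfIntegers.eq_iff.mp (by push_cast; exact this)
  · exact hquot
  · refine ⟨⟨t1, ht1int⟩, ?_⟩
    apply NumberField.RingOfIntegers.ext
    push_cast
    exact ht1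
end
end
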